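/- arXiv:2110.00285 — 2 statements merged into one kernel-verified Lean document; each statement's English description precedes it below -/
import Mathlib

section
/- For every matrix A ∈ ℝ_max^{n×n}, the maximum root of the characteristic polynomial χ_A(t) equals the maximum eigenvalue of A. -/
open Filter

noncomputable section

/-- The max-plus semiring ℝ_max = ℝ ∪ {ε}, with ε = ⊥ = −∞,
`a ⊕ b = max a b` and `a ⊗ b = a + b` (the `Add` of `WithBot ℝ`). -/
abbrev RMax : Type := WithBot ℝ

/-- Max-plus vectors. -/
abbrev Vec (ι : Type) : Type := ι → RMax

/-- The max-plus zero vector ℰ. -/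
def zeroV (ι : Type) : Vec ι := fun _ => (⊥ : RMax)

/-- Max-plus "negation" (inversion for ⊗), fixing ⊥. -/
def mpNeg (a : RMax) : RMax := WithBot.map (fun r : ℝ => -r) a

section Defs

variable {ι κ₁ κ₂ κ₃ : Type}

/-- Matrix (or vector) sum `M ⊕ N`, entrywise max. -/
def mpAddM (M N : Matrix κ₁ κ₂ RMax) : Matrix κ₁ κ₂ RMax := fun i j => max (M i j) (N i j)

/-- Scalar multiplication `l ⊗ M` of a matrix. -/
def smulM (l : RMax) (M : Matrix κ₁ κ₂ RMax) : Matrix κ₁ κ₂ RMax := fun i j => l + M i j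

/-- Scalar multiplication `l ⊗ x` of a vector. -/
def smulV (l : RMax) (x : Vec ι) : Vec ι := fun i => l + x i

/-- Max-plus matrix product `M ⊗ N`. -/
def mpMul [Fintype κ₂] (M : Matrix κ₁ κ₂ RMax) (N : Matrix κ₂ κ₃ RMax) : Matrix κ₁ κ₃ RMax :=
  fun i j => Finset.univ.sup fun k => M i k + N k j

/-- Max-plus matrix-vector product `M ⊗ x`. -/
def mpMulVec [Fintype κ₂] (M : Matrix κ₁ κ₂ RMax) (x : Vec κ₂) : Vec κ₁ :=
  fun i => Finset.univ.sup fun j => M i j + x j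

/-- The max-plus identity matrix `E_n` (0 on the diagonal, ε elsewhere). -/
def mpId [DecidableEq ι] : Matrix ι ι RMax := fun i j => if i = j then (0 : RMax) else ⊥

/-- Max-plus inverse of a generalized permutation matrix:
the transpose with the finite entries negated. -/
def genInv (P : Matrix ι ι RMax) : Matrix ι ι RMax := fun i j => mpNeg (P j i)

/-- The max-plus determinant `det A = ⊕_π ⊗_i a_{i π(i)}`. -/
def mpDet [Fintype ι] [DecidableEq ι] (A : Matrix ι ι RMax) : RMax :=
  Finset.univ.sup fun π : Equiv.Perm ι => ∑ i, A i (π i)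

/-- Max-plus matrix powers. -/
def mpPow [Fintype ι] [DecidableEq ι] (P : Matrix ι ι RMax) : ℕ → Matrix ι ι RMax
  | 0 => mpId
  | k + 1 => mpMul P (mpPow P k)

/-- The Kleene star `P* = E ⊕ P ⊕ P^{⊗2} ⊕ ⋯ ⊕ P^{⊗(n−1)}`. -/
def mpStar [Fintype ι] [DecidableEq ι] (P : Matrix ι ι RMax) : Matrix ι ι RMax :=
  fun i j => (Finset.range (Fintype.card ι)).sup fun k => mpPow P k i j

/-- A multi-circuit on the vertex set `ι`: a union of vertex-disjoint elementary circuits,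
encoded by its vertex set `verts` together with the successor permutation `perm`,
which is the identity outside `verts`.  Its edge set is `{(i, perm i) | i ∈ verts}`
and its length is `verts.card`. -/
structure MultiCircuit (ι : Type) where
  verts : Finset ι
  perm : Equiv.Perm ι
  fixes : ∀ i, i ∉ verts → perm i = i

/-- The weight `w(C)` of a multi-circuit with respect to the matrix `A`. -/
def mcWeight (A : Matrix ι ι RMax) (C : MultiCircuit ι) : RMax :=
  ∑ i ∈ C.verts, A i (C.perm i)

/-- The multi-circuit `C` lies in the graph `G(A)` (all its edges have weight ≠ ε). -/
def InGraph (A : Matrix ι ι RMax) (C : MultiCircuit ι) : Prop :=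
  ∀ i ∈ C.verts, A i (C.perm i) ≠ ⊥

/-- A multi-circuit consisting of a single (elementary) circuit. -/
def IsCircuit (C : MultiCircuit ι) : Prop :=
  C.verts.Nonempty ∧ ∀ i ∈ C.verts, ∀ j ∈ C.verts, C.perm.SameCycle i j

/-- `D` is a critical circuit of `G(A)`: an elementary circuit of `G(A)` whose average
weight is maximal among all elementary circuits of `G(A)`
(averages `w/ℓ` are compared without division via `ℓ' • w ≥ ℓ • w'`). -/
def IsCritical (A : Matrix ι ι RMax) (D : MultiCircuit ι) : Prop :=
  IsCircuit D ∧ InGraph A D ∧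
    ∀ D' : MultiCircuit ι, IsCircuit D' → InGraph A D' →
      D.verts.card • mcWeight A D' ≤ D'.verts.card • mcWeight A D

/-- `ρ` is the maximum average weight of the (elementary) circuits of `G(A)`,
taken to be ε if `G(A)` has no circuit. -/
def IsMaxCycleMean (A : Matrix ι ι RMax) (ρ : RMax) : Prop :=
  (∀ D : MultiCircuit ι, IsCircuit D → InGraph A D → mcWeight A D ≤ D.verts.card • ρ) ∧
    ((∃ D : MultiCircuit ι, IsCircuit D ∧ InGraph A D ∧ mcWeight A D = D.verts.card • ρ) ∨
      (ρ = ⊥ ∧ ∀ D : MultiCircuit ι, IsCircuit D → ¬InGraph A D))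

/-- `l` is a (geometric) eigenvalue of `A`: `A ⊗ x = l ⊗ x` for some `x ≠ ℰ`. -/
def IsEigen [Fintype ι] (A : Matrix ι ι RMax) (l : RMax) : Prop :=
  ∃ x : Vec ι, x ≠ zeroV ι ∧ mpMulVec A x = smulV l x

variable [Fintype ι] [DecidableEq ι]

/-- The value `w(C) ⊗ l^{⊗(n − ℓ(C))}` of the term of `χ_A(l)` corresponding to the
multi-circuit `C`. -/
def ValAt (A : Matrix ι ι RMax) (C : MultiCircuit ι) (l : RMax) : RMax :=
  mcWeight A C + (Fintype.card ι - C.verts.card) • l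

/-- `C` is `μ`-maximal (for a real `μ`): it attains
`χ_A(μ) = max_C (w(C) + (n − ℓ(C))·μ)`. -/
def MaximalAt (A : Matrix ι ι RMax) (C : MultiCircuit ι) (μ : ℝ) : Prop :=
  ∀ C' : MultiCircuit ι, ValAt A C' (μ : RMax) ≤ ValAt A C (μ : RMax)

/-- `C` is `l`-maximal, for `l ∈ ℝ_max`; for `l = ε` this means `μ`-maximal for all
sufficiently small real `μ`. -/
def IsLamMax (A : Matrix ι ι RMax) (C : MultiCircuit ι) (l : RMax) : Prop :=
  (∀ μ : ℝ, l = (μ : RMax) → MaximalAt A C μ) ∧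
    (l = ⊥ → ∃ μ₀ : ℝ, ∀ μ : ℝ, μ ≤ μ₀ → MaximalAt A C μ)

/-- `l` is an algebraic eigenvalue of `A`, i.e. a root of the characteristic polynomial
`χ_A(t)`: a real `l` is a root iff there are two `l`-maximal multi-circuits of different
lengths, and `ε` is a root iff `G(A)` contains no multi-circuit of length `n`. -/
def IsAlgEigen (A : Matrix ι ι RMax) (l : RMax) : Prop :=
  (l ≠ ⊥ ∧ ∃ C C' : MultiCircuit ι, IsLamMax A C l ∧ IsLamMax A C' l ∧
      C.verts.card ≠ C'.verts.card) ∨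
    (l = ⊥ ∧ ∀ C : MultiCircuit ι, C.verts.card = Fintype.card ι → ¬InGraph A C)

open Classical in
/-- The multiplicity of `l` as a root of the characteristic polynomial `χ_A(t)`:
for a real `l` it is the difference between the maximal and the minimal length of an
`l`-maximal multi-circuit; for `l = ε` it is `n` minus the maximal length of a
multi-circuit of `G(A)`.  It is `0` when `l` is not a root. -/
noncomputable def rootMult (A : Matrix ι ι RMax) (l : RMax) : ℕ :=
  if l = ⊥ then
    Fintype.card ι - sSup {m : ℕ | ∃ C : MultiCircuit ι, InGraph A C ∧ C.verts.card = m}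
  else
    sSup {m : ℕ | ∃ C : MultiCircuit ι, IsLamMax A C l ∧ C.verts.card = m} -
      sInf {m : ℕ | ∃ C : MultiCircuit ι, IsLamMax A C l ∧ C.verts.card = m}

/-- The matrix `A_C`. -/
def matC (A : Matrix ι ι RMax) (C : MultiCircuit ι) : Matrix ι ι RMax :=
  fun i j => if i ∈ C.verts ∧ j = C.perm i then A i j else ⊥

/-- The matrix `A_{∖C}`. -/
def matNotC (A : Matrix ι ι RMax) (C : MultiCircuit ι) : Matrix ι ι RMax :=
  fun i j => if i ∈ C.verts ∧ j = C.perm i then ⊥ else A i j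

/-- The diagonal matrix `E_C`. -/
def eC (C : MultiCircuit ι) : Matrix ι ι RMax :=
  fun i j => if i = j ∧ i ∈ C.verts then (0 : RMax) else ⊥

/-- The diagonal matrix `E_{∖C}`. -/
def eNotC (C : MultiCircuit ι) : Matrix ι ι RMax :=
  fun i j => if i = j ∧ i ∉ C.verts then (0 : RMax) else ⊥

/-- `W(A,l,C) = {x : (A_{∖C} ⊕ l ⊗ E_C) ⊗ x = (A_C ⊕ l ⊗ E_{∖C}) ⊗ x}`. -/
def WAC (A : Matrix ι ι RMax) (l : RMax) (C : MultiCircuit ι) : Set (Vec ι) :=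
  {x | mpMulVec (mpAddM (matNotC A C) (smulM l (eC C))) x =
       mpMulVec (mpAddM (matC A C) (smulM l (eNotC C))) x}

/-- `B_{A,l,C} = (A_C ⊕ l ⊗ E_{∖C})^{−1} ⊗ (A_{∖C} ⊕ l ⊗ E_C)`. -/
def Bmat (A : Matrix ι ι RMax) (l : RMax) (C : MultiCircuit ι) : Matrix ι ι RMax :=
  mpMul (genInv (mpAddM (matC A C) (smulM l (eNotC C)))) (mpAddM (matNotC A C) (smulM l (eC C)))

/-- Assumption (★): for each `l ∈ ℝ_max`, any two distinct `l`-maximal multi-circuits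
of `G(A)` have different lengths. -/
def StarAssumption (A : Matrix ι ι RMax) : Prop :=
  ∀ l : RMax, ∀ C C' : MultiCircuit ι, IsLamMax A C l → IsLamMax A C' l →
    C.verts.card = C'.verts.card → C = C'

/-- The perturbed matrix `A(ζ;δ)` with entries `a_{ij} − ζ_{ij}·δ` (ε stays ε). -/
def perturb (A : Matrix ι ι RMax) (ζ : Matrix ι ι ℝ) (δ : ℝ) : Matrix ι ι RMax :=
  fun i j => A i j + ((-(ζ i j * δ) : ℝ) : RMax)

/-- The set `Z` of perturbation directions `ζ ∈ [0,1]^{n×n}` for which `A(ζ;δ)`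
satisfies (★) for all sufficiently small `δ > 0`. -/
def Zset (A : Matrix ι ι RMax) : Set (Matrix ι ι ℝ) :=
  {ζ | (∀ i j, ζ i j ∈ Set.Icc (0 : ℝ) 1) ∧
    ∃ δ' : ℝ, 0 < δ' ∧ ∀ δ : ℝ, 0 < δ → δ < δ' → StarAssumption (perturb A ζ δ)}

/-- The interval `B(l, r) = [l − r, l + r] ⊆ ℝ_max` (and `B(ε, r) = {ε}`). -/
def mpBall (l : RMax) (r : ℝ) : Set RMax :=
  {l' | (l = ⊥ ∧ l' = ⊥) ∨ ∃ x y : ℝ, l = (x : RMax) ∧ l' = (y : RMax) ∧ |y - x| ≤ r}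

/-- Convergence in `ℝ_max` as `δ → +0`. -/
def RMaxTendsto (f : ℝ → RMax) (a : RMax) : Prop :=
  (a = ⊥ → ∀ M : ℝ, ∀ᶠ δ in nhdsWithin 0 (Set.Ioi (0 : ℝ)), f δ < (M : RMax)) ∧
    (∀ x : ℝ, a = (x : RMax) → ∀ ε : ℝ, 0 < ε →
      ∀ᶠ δ in nhdsWithin 0 (Set.Ioi (0 : ℝ)), ∃ y : ℝ, f δ = (y : RMax) ∧ |y - x| < ε)

/-- The (max-plus) sum `⊕_k U_k` of a family of subsets of `ℝ_max^n`. -/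
def setSum {κ : Type} (U : κ → Set (Vec ι)) : Set (Vec ι) :=
  {x | ∃ s : Finset κ, ∃ f : κ → Vec ι, (∀ k ∈ s, f k ∈ U k) ∧
    x = fun i => s.sup fun k => f k i}

/-- The limit `lim_{δ→+0} S(δ)` of a parametrized family of subsets of `ℝ_max^n`. -/
def setLim (S : ℝ → Set (Vec ι)) : Set (Vec ι) :=
  {x | ∃ g : ℝ → Vec ι, (∀ δ : ℝ, 0 < δ → g δ ∈ S δ) ∧
    ∀ i : ι, RMaxTendsto (fun δ => g δ i) (x i)}

/-- The sum `⊕_{l' ∈ S} W(A', l', C_{l'})`, where `C_{l'}` is an `l'`-maximal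
multi-circuit of `G(A')`. -/
def perturbSum (A' : Matrix ι ι RMax) (S : Set RMax) : Set (Vec ι) :=
  setSum fun l : S =>
    {x | ∃ C : MultiCircuit ι, IsLamMax A' C (l : RMax) ∧ x ∈ WAC A' (l : RMax) C}

/-- The algebraic eigenspace
`W(A,l) = ⋂_{ζ∈Z} lim_{δ→+0} ⊕_{l' ∈ B(l,nδ)} W(A(ζ;δ), l', C_{l'}(ζ;δ))`. -/
def algEigenspace (A : Matrix ι ι RMax) (l : RMax) : Set (Vec ι) :=
  ⋂ ζ ∈ Zset A, setLim fun δ => perturbSum (perturb A ζ δ) (mpBall l (Fintype.card ι * δ))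

/-- The max-plus span of a set of vectors: all finite max-plus linear combinations. -/
def mpSpan (S : Set (Vec ι)) : Set (Vec ι) :=
  {x | ∃ s : Finset (Vec ι), ↑s ⊆ S ∧ ∃ c : Vec ι → RMax,
    x = fun i => s.sup fun v => c v + v i}

/-- `B` is a basis of `U`: a minimal spanning set. -/
def IsBasis (B U : Set (Vec ι)) : Prop :=
  mpSpan B = U ∧ ∀ B' : Set (Vec ι), B' ⊆ B → mpSpan B' = U → B' = B

/-- Tropical orthogonality: the maximum in `ᵗx ⊗ y = ⊕_i x_i ⊗ y_i` is attained
at least twice (a maximum equal to ε counting as attained by all indices). -/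
def Orthogonal (x y : Vec ι) : Prop :=
  (Finset.univ.sup fun i => x i + y i) = ⊥ ∨
    ∃ i j : ι, i ≠ j ∧ x i + y i = (Finset.univ.sup fun k => x k + y k) ∧
      x j + y j = (Finset.univ.sup fun k => x k + y k)

/-- The tropical kernel of a matrix: vectors for which, in every row, the maximum is
attained at least twice (a maximum equal to ε counting as attained by all indices). -/
def tropKernel {κ : Type} (A : Matrix κ ι RMax) : Set (Vec ι) :=
  {x | ∀ i : κ, (Finset.univ.sup fun j => A i j + x j) = ⊥ ∨
    ∃ j k : ι, j ≠ k ∧ A i j + x j = (Finset.univ.sup fun j' => A i j' + x j') ∧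
      A i k + x k = (Finset.univ.sup fun j' => A i j' + x j')}

/-- `A` is (tropically) nonsingular: the maximum in `det A` is attained by exactly
one permutation. -/
def Nonsingular (A : Matrix ι ι RMax) : Prop :=
  ∃! π : Equiv.Perm ι, (∑ i, A i (π i)) = mpDet A

/-- The minor `A^{(r,c)}`, deleting row `r` and column `c`. -/
def mpMinor {n : ℕ} (A : Matrix (Fin (n + 1)) (Fin (n + 1)) RMax) (r c : Fin (n + 1)) :
    Matrix (Fin n) (Fin n) RMax :=
  fun i j => A (r.succAbove i) (c.succAbove j)

/-- The max-plus adjugate, `adj(A)_{ij} = det A^{(j,i)}`. -/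
def mpAdj {n : ℕ} (A : Matrix (Fin (n + 1)) (Fin (n + 1)) RMax) :
    Matrix (Fin (n + 1)) (Fin (n + 1)) RMax :=
  fun i j => mpDet (mpMinor A j i)

/-- The submatrix `[A_C]_{KK}` with `K = V(C)`. -/
def subPC (A : Matrix ι ι RMax) (C : MultiCircuit ι) :
    Matrix {k // k ∈ C.verts} {k // k ∈ C.verts} RMax :=
  fun i j => matC A C i.1 j.1

/-- The submatrix `[A_{∖C}]_{KK}` with `K = V(C)`. -/
def subPNC (A : Matrix ι ι RMax) (C : MultiCircuit ι) :
    Matrix {k // k ∈ C.verts} {k // k ∈ C.verts} RMax :=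
  fun i j => matNotC A C i.1 j.1

/-- The matrix `M = [A_C]_{KK}^{−1} ⊗ [A_{∖C}]_{KK}`. -/
def xiM (A : Matrix ι ι RMax) (C : MultiCircuit ι) :
    Matrix {k // k ∈ C.verts} {k // k ∈ C.verts} RMax :=
  mpMul (genInv (subPC A C)) (subPNC A C)

/-- `M* ⊗ ([A_C]_{KK}^{−1} ⊗ [A]_{KL}) ⊗ [x]_L`, the `K`-part of `ξ_{A,C}(x)`. -/
def xiVec (A : Matrix ι ι RMax) (C : MultiCircuit ι) (x : Vec ι) : Vec {k // k ∈ C.verts} :=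
  mpMulVec (mpStar (xiM A C)) (mpMulVec (genInv (subPC A C))
    (fun k : {k // k ∈ C.verts} =>
      (Finset.univ.filter fun j : ι => j ∉ C.verts).sup fun j => A k.1 j + x j))

/-- The linear map `ξ_{A,C} : ℝ_max^n → ℝ_max^n`. -/
def xi (A : Matrix ι ι RMax) (C : MultiCircuit ι) (x : Vec ι) : Vec ι :=
  fun i => if h : i ∈ C.verts then xiVec A C x ⟨i, h⟩ else x i

end Defs

end


set_option linter.unusedSectionVars false
set_option linter.unusedVariables false
set_option linter.unreachableTactic false
set_option linter.unusedTactic false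
set_option maxHeartbeats 1000000

noncomputable section
open Finset

attribute [local instance] Classical.propDecidable

namespace MPHelp

variable {ι : Type} [Fintype ι] [DecidableEq ι]

lemma MultiCircuit.ext' {C C' : MultiCircuit ι} (h1 : C.verts = C'.verts)
    (h2 : C.perm = C'.perm) : C = C' := by
  cases C; cases C'; simp_all

instance : Fintype (MultiCircuit ι) :=
  Fintype.ofInjective (fun C => (C.verts, C.perm))
    (fun C C' h => MultiCircuit.ext' (congrArg Prod.fst h) (congrArg Prod.snd h))

lemma add_finsetSup {α : Type*} (s : Finset α) (hs : s.Nonempty) (a : RMax) (f : α → RMax) :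
    a + s.sup f = s.sup fun b => a + f b := by
  apply le_antisymm
  · obtain ⟨b, hb, hbe⟩ := s.exists_mem_eq_sup hs f
    rw [hbe]
    exact le_sup (f := fun b => a + f b) hb
  · exact Finset.sup_le fun b hb => add_le_add_right (le_sup hb) a

lemma sum_bot {α : Type*} {s : Finset α} {f : α → RMax} {i : α} (hi : i ∈ s) (h : f i = ⊥) :
    ∑ j ∈ s, f j = ⊥ := by
  rw [← Finset.add_sum_erase _ _ hi, h, WithBot.bot_add]

/-- real value of the weight of a multicircuit -/
def wR (A : Matrix ι ι RMax) (C : MultiCircuit ι) : ℝ :=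
  ∑ i ∈ C.verts, WithBot.unbotD 0 (A i (C.perm i))

lemma mcWeight_coe {A : Matrix ι ι RMax} {C : MultiCircuit ι} (h : InGraph A C) :
    mcWeight A C = ((wR A C : ℝ) : RMax) := by
  rw [wR, WithBot.coe_sum, mcWeight]
  refine Finset.sum_congr rfl fun i hi => ?_
  obtain ⟨r, hr⟩ := WithBot.ne_bot_iff_exists.mp (h i hi)
  rw [← hr]; simp

lemma mcWeight_ne_bot_iff {A : Matrix ι ι RMax} {C : MultiCircuit ι} :
    mcWeight A C ≠ ⊥ ↔ InGraph A C := by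
  constructor
  · intro h i hi hbot
    exact h (sum_bot hi hbot)
  · intro h
    rw [mcWeight_coe h]
    exact WithBot.coe_ne_bot

lemma perm_mem {C : MultiCircuit ι} {i : ι} (hi : i ∈ C.verts) : C.perm i ∈ C.verts := by
  by_contra h
  have h2 := C.fixes _ h
  have h3 : C.perm i = i := C.perm.injective h2
  exact h (h3.symm ▸ hi)

lemma perm_pow_mem {C : MultiCircuit ι} {i : ι} (hi : i ∈ C.verts) (t : ℕ) :
    (C.perm ^ t) i ∈ C.verts := by
  induction t with
  | zero => simpa using hi
  | succ k ih => rw [pow_succ', Equiv.Perm.mul_apply]; exact perm_mem ih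

lemma perm_inv_mem {C : MultiCircuit ι} {i : ι} (hi : i ∈ C.verts) : C.perm⁻¹ i ∈ C.verts := by
  by_contra h
  have h2 := C.fixes _ h
  have : C.perm (C.perm⁻¹ i) = C.perm⁻¹ i := by rw [h2]
  rw [Equiv.Perm.coe_inv, Equiv.apply_symm_apply] at this
  exact h (this ▸ hi)

lemma perm_zpow_mem {C : MultiCircuit ι} {i : ι} (hi : i ∈ C.verts) (z : ℤ) :
    (C.perm ^ z) i ∈ C.verts := by
  induction z using Int.induction_on with
  | zero => simpa using hi
  | succ k ih => rw [show (k:ℤ)+1 = 1 + k by ring, zpow_add, zpow_one, Equiv.Perm.mul_apply]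
                 exact perm_mem ih
  | pred k ih => rw [show -(k:ℤ)-1 = -1 + -k by ring, zpow_add, Equiv.Perm.mul_apply,
                  zpow_neg, zpow_one]
                 exact perm_inv_mem ih

end MPHelp

noncomputable section
open Finset

attribute [local instance] Classical.propDecidable

namespace MPHelp

variable {ι : Type} [Fintype ι] [DecidableEq ι]

/-- weight of the walk f 0, f 1, ..., f k -/
def wW (M : Matrix ι ι RMax) (f : ℕ → ι) (k : ℕ) : RMax :=
  ∑ t ∈ Finset.range k, M (f t) (f (t + 1))

lemma formPerm_circuit (M : Matrix ι ι RMax) (f : ℕ → ι) (k : ℕ) (hk : 1 ≤ k)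
    (hcl : f k = f 0) (hinj : ∀ a b, a < k → b < k → f a = f b → a = b) :
    ∃ D : MultiCircuit ι, IsCircuit D ∧ D.verts.card = k ∧
      mcWeight M D = wW M f k ∧ (wW M f k ≠ ⊥ → InGraph M D) := by
  set L : List ι := (List.range k).map f with hL
  have hlen : L.length = k := by simp [hL]
  have hget : ∀ t (ht : t < k), L[t]'(by omega) = f t := by
    intro t ht; simp [hL]
  have hnd : L.Nodup := by
    refine List.Nodup.map_on ?_ List.nodup_range
    intro a ha b hb hab
    exact hinj a b (List.mem_range.mp ha) (List.mem_range.mp hb) hab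
  have hmemL : ∀ j, j ∈ L ↔ ∃ t, t < k ∧ f t = j := by
    intro j; simp [hL, List.mem_map, List.mem_range]
  -- the key step property
  have hstep : ∀ t, t < k → L.formPerm (f t) = f (t + 1) := by
    intro t ht
    have h1 : L.formPerm (L[t]'(by omega)) = L[(t+1) % L.length]'(by
        exact Nat.mod_lt _ (by omega)) := List.formPerm_apply_getElem L hnd t (by omega)
    rw [hget t ht] at h1
    rcases eq_or_lt_of_le (Nat.succ_le_of_lt ht) with he | hlt
    · rw [h1]
      have h0 : (t+1) % L.length = 0 := by rw [hlen, ← he]; exact Nat.mod_self _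
      simp only [h0]
      rw [hget 0 (by omega), ← hcl]
      congr 1
      omega
    · rw [h1]
      have : (t+1) % L.length = t+1 := by rw [hlen]; exact Nat.mod_eq_of_lt hlt
      simp only [this]
      exact hget (t+1) hlt
  refine ⟨⟨L.toFinset, L.formPerm, fun i hi => List.formPerm_apply_of_notMem
      (by simpa using hi)⟩, ?_, ?_, ?_, ?_⟩
  · constructor
    · exact ⟨f 0, by simp; exact (hmemL (f 0)).mpr ⟨0, by omega, rfl⟩⟩
    · intro i hi j hj
      simp only [List.mem_toFinset] at hi hj
      obtain ⟨a, ha, rfl⟩ := (hmemL i).mp hi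
      obtain ⟨b, hb, rfl⟩ := (hmemL j).mp hj
      refine ⟨((b + k - a : ℕ) : ℤ), ?_⟩
      rw [zpow_natCast]
      have h2 : (L.formPerm ^ (b + k - a)) (L[a]'(by omega)) =
          L[(a + (b + k - a)) % L.length]'(Nat.mod_lt _ (by omega)) :=
        List.formPerm_pow_apply_getElem L hnd _ a (by omega)
      rw [hget a ha] at h2
      have h3 : (a + (b + k - a)) % L.length = b := by
        rw [hlen]
        have : a + (b + k - a) = b + k := by omega
        rw [this, Nat.add_mod_right]
        exact Nat.mod_eq_of_lt hb
      simp only [h3] at h2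
      rw [h2, hget b hb]
  · simp only []
    rw [List.toFinset_card_of_nodup hnd, hlen]
  · simp only [mcWeight]
    rw [wW]
    refine (Finset.sum_bij (fun t ht => f t) ?_ ?_ ?_ ?_).symm
    · intro t ht
      simp only [List.mem_toFinset]
      exact (hmemL (f t)).mpr ⟨t, List.mem_range.mp ht, rfl⟩
    · intro a ha b hb hab
      exact hinj a b (List.mem_range.mp ha) (List.mem_range.mp hb) hab
    · intro j hj
      simp only [List.mem_toFinset] at hj
      obtain ⟨t, ht, rfl⟩ := (hmemL j).mp hj
      exact ⟨t, List.mem_range.mpr ht, rfl⟩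
    · intro t ht
      rw [hstep t (List.mem_range.mp ht)]
  · intro hne i hi
    simp only [List.mem_toFinset] at hi
    obtain ⟨t, ht, rfl⟩ := (hmemL i).mp hi
    rw [hstep t ht]
    intro hbot
    exact hne (sum_bot (Finset.mem_range.mpr ht) hbot)

lemma wW_split (M : Matrix ι ι RMax) (f : ℕ → ι) {a b k : ℕ} (hab : a < b) (hbk : b ≤ k)
    (hfab : f a = f b) :
    ∃ g : ℕ → ι, g 0 = f 0 ∧ g (k - (b - a)) = f k ∧
      wW M f k = wW M g (k - (b - a)) + wW M (fun t => f (a + t)) (b - a) := by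
  set d := b - a with hd
  set g : ℕ → ι := fun t => if t ≤ a then f t else f (t + d) with hg
  have hgval : ∀ t, a ≤ t → g t = f (t + d) := by
    intro t ht
    rcases eq_or_lt_of_le ht with rfl | h
    · simp [hg, hfab]; congr 1; omega
    · simp [hg, Nat.not_le.mpr h]
  refine ⟨g, by simp [hg], ?_, ?_⟩
  · rcases le_or_gt (k - d) a with h | h
    · have hkb : k = b := by omega
      have : k - d = a := by omega
      rw [this]; simp [hg, hfab, hkb]
    · rw [hgval _ (le_of_lt h)]; congr 1; omega
  · have hedge : ∀ t, t < k - d → M (g t) (g (t+1)) = if t < a then M (f t) (f (t+1))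
        else M (f (t + d)) (f (t + d + 1)) := by
      intro t ht
      by_cases h : t < a
      · simp only [if_pos h, hg, if_pos (by omega : t ≤ a), if_pos (by omega : t + 1 ≤ a)]
      · rw [if_neg h, hgval t (by omega), hgval (t+1) (by omega)]
        have h2 : t + 1 + d = t + d + 1 := by omega
        rw [h2]
    -- split sums
    have e1 : wW M g (k - d) = ∑ t ∈ Finset.range a, M (f t) (f (t+1)) +
        ∑ t ∈ Finset.Ico a (k - d), M (f (t + d)) (f (t + d + 1)) := by
      rw [wW, Finset.range_eq_Ico, ← Finset.sum_Ico_consecutive _ (Nat.zero_le a) (by omega),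
        ← Finset.range_eq_Ico]
      congr 1
      · refine Finset.sum_congr rfl fun t ht => ?_
        rw [hedge t (by have := Finset.mem_range.mp ht; omega), if_pos (Finset.mem_range.mp ht)]
      · refine Finset.sum_congr rfl fun t ht => ?_
        simp only [Finset.mem_Ico] at ht
        rw [hedge t ht.2, if_neg (by omega)]
    have e2 : ∑ t ∈ Finset.Ico a (k - d), M (f (t + d)) (f (t + d + 1)) =
        ∑ t ∈ Finset.Ico b k, M (f t) (f (t+1)) := by
      rw [Finset.sum_Ico_eq_sum_range, Finset.sum_Ico_eq_sum_range]
      have : k - d - a = k - b := by omega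
      rw [this]
      refine Finset.sum_congr rfl fun t ht => ?_
      congr 2 <;> omega
    have e3 : wW M (fun t => f (a + t)) d = ∑ t ∈ Finset.Ico a b, M (f t) (f (t+1)) := by
      rw [wW, Finset.sum_Ico_eq_sum_range]
      have : b - a = d := rfl
      rw [this]
      refine Finset.sum_congr rfl fun t ht => ?_
      congr 2 <;> omega
    rw [e1, e2, e3, wW, Finset.range_eq_Ico,
      ← Finset.sum_Ico_consecutive _ (Nat.zero_le a) (le_trans (le_of_lt hab) hbk),
      ← Finset.sum_Ico_consecutive _ (le_of_lt hab) hbk, ← Finset.range_eq_Ico]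
    abel

end MPHelp

noncomputable section
open Finset

attribute [local instance] Classical.propDecidable

namespace MPHelp

variable {ι : Type} [Fintype ι] [DecidableEq ι]

lemma exists_dup {f : ℕ → ι} {k : ℕ}
    (h : ¬ ∀ a b, a < k → b < k → f a = f b → a = b) :
    ∃ a b, a < b ∧ b < k ∧ f a = f b := by
  push_neg at h
  obtain ⟨a, b, ha, hb, heq, hne⟩ := h
  rcases lt_or_gt_of_ne hne with h1 | h1
  · exact ⟨a, b, h1, hb, heq⟩
  · exact ⟨b, a, h1, ha, heq.symm⟩

lemma closed_walk_bound (M : Matrix ι ι RMax) (c : ℝ)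
    (hc : ∀ D : MultiCircuit ι, IsCircuit D → InGraph M D →
      mcWeight M D ≤ D.verts.card • ((c : ℝ) : RMax)) :
    ∀ k (f : ℕ → ι), f k = f 0 → wW M f k ≤ k • ((c : ℝ) : RMax) := by
  intro k
  induction k using Nat.strong_induction_on with
  | _ k ih =>
    intro f hcl
    rcases Nat.eq_zero_or_pos k with rfl | hk
    · simp [wW]
    by_cases hinj : ∀ a b, a < k → b < k → f a = f b → a = b
    · obtain ⟨D, hD, hcard, hw, hg⟩ := formPerm_circuit M f k hk hcl hinj
      by_cases hbot : wW M f k = ⊥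
      · rw [hbot]; exact bot_le
      · rw [← hw]
        rw [← hcard]
        exact hc D hD (hg hbot)
    · obtain ⟨a, b, hab, hbk, heq⟩ := exists_dup hinj
      obtain ⟨g, hg0, hgk, hsplit⟩ := wW_split M f hab (le_of_lt hbk) heq
      have h1 : wW M g (k - (b - a)) ≤ (k - (b - a)) • ((c : ℝ) : RMax) :=
        ih _ (by omega) g (by rw [hgk, hg0, hcl])
      have h2 : wW M (fun t => f (a + t)) (b - a) ≤ (b - a) • ((c : ℝ) : RMax) :=
        ih _ (by omega) _ (by show f (a + (b - a)) = f (a + 0)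
                              rw [Nat.add_sub_cancel' (le_of_lt hab), add_zero]; exact heq.symm)
      calc wW M f k = wW M g (k - (b - a)) + wW M (fun t => f (a + t)) (b - a) := hsplit
        _ ≤ (k - (b - a)) • ((c : ℝ) : RMax) + (b - a) • ((c : ℝ) : RMax) := add_le_add h1 h2
        _ = ((k - (b - a)) + (b - a)) • ((c : ℝ) : RMax) := (add_nsmul _ _ _).symm
        _ = k • ((c : ℝ) : RMax) := by congr 1; omega

lemma closed_walk_circuit (M : Matrix ι ι RMax) :
    ∀ k (f : ℕ → ι), 1 ≤ k → f k = f 0 → wW M f k ≠ ⊥ →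
      ∃ D : MultiCircuit ι, IsCircuit D ∧ InGraph M D := by
  intro k
  induction k using Nat.strong_induction_on with
  | _ k ih =>
    intro f hk hcl hne
    by_cases hinj : ∀ a b, a < k → b < k → f a = f b → a = b
    · obtain ⟨D, hD, hcard, hw, hg⟩ := formPerm_circuit M f k hk hcl hinj
      exact ⟨D, hD, hg hne⟩
    · obtain ⟨a, b, hab, hbk, heq⟩ := exists_dup hinj
      obtain ⟨g, hg0, hgk, hsplit⟩ := wW_split M f hab (le_of_lt hbk) heq
      rw [hsplit] at hne
      have hne2 : wW M (fun t => f (a + t)) (b - a) ≠ ⊥ :=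
        fun h => hne (by rw [h, WithBot.add_bot])
      exact ih (b - a) (by omega) _ (by omega)
        (by show f (a + (b - a)) = f (a + 0)
            rw [Nat.add_sub_cancel' (le_of_lt hab), add_zero]; exact heq.symm)
        hne2

lemma walk_le_pow (M : Matrix ι ι RMax) : ∀ (k : ℕ) (f : ℕ → ι),
    wW M f k ≤ mpPow M k (f 0) (f k) := by
  intro k
  induction k with
  | zero => intro f; simp [wW, mpPow, mpId]
  | succ k ih =>
    intro f
    have h1 : wW M f (k + 1) = M (f 0) (f 1) + wW M (fun t => f (t + 1)) k := by
      rw [wW, Finset.sum_range_succ', wW]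
      rw [add_comm]
    rw [h1]
    have h2 : wW M (fun t => f (t+1)) k ≤ mpPow M k (f 1) (f (k + 1)) := ih _
    calc M (f 0) (f 1) + wW M (fun t => f (t+1)) k
        ≤ M (f 0) (f 1) + mpPow M k (f 1) (f (k+1)) := add_le_add_right h2 _
      _ ≤ mpPow M (k+1) (f 0) (f (k+1)) := by
          show _ ≤ mpMul M (mpPow M k) (f 0) (f (k+1))
          exact Finset.le_sup (f := fun m => M (f 0) m + mpPow M k m (f (k+1)))
            (Finset.mem_univ (f 1))

lemma pow_le_walk (M : Matrix ι ι RMax) : ∀ (k : ℕ) (i j : ι), mpPow M k i j ≠ ⊥ →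
    ∃ f : ℕ → ι, f 0 = i ∧ f k = j ∧ mpPow M k i j ≤ wW M f k := by
  intro k
  induction k with
  | zero =>
    intro i j h
    by_cases hij : i = j
    · subst hij
      exact ⟨fun _ => i, rfl, rfl, by simp [wW, mpPow, mpId]⟩
    · exfalso; apply h; simp [mpPow, mpId, hij]
  | succ k ih =>
    intro i j h
    have hexp : mpPow M (k+1) i j = Finset.univ.sup fun m => M i m + mpPow M k m j := rfl
    have hne' : Nonempty ι := ⟨i⟩
    obtain ⟨m, _, hm⟩ := Finset.exists_mem_eq_sup Finset.univ Finset.univ_nonempty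
      (fun m => M i m + mpPow M k m j)
    rw [hexp, hm] at h ⊢
    have hne : mpPow M k m j ≠ ⊥ := fun hb => h (by rw [hb, WithBot.add_bot])
    obtain ⟨f', hf0, hfk, hle⟩ := ih m j hne
    refine ⟨fun t => if t = 0 then i else f' (t - 1), by simp, by simp [hfk], ?_⟩
    have h1 : wW M (fun t => if t = 0 then i else f' (t - 1)) (k + 1) =
        M i (f' 0) + wW M f' k := by
      rw [wW, Finset.sum_range_succ', add_comm, wW]
      simp
    rw [h1, hf0]
    exact add_le_add_right hle _

lemma walk_shorten (M : Matrix ι ι RMax) [Nonempty ι]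
    (h0 : ∀ k (f : ℕ → ι), f k = f 0 → wW M f k ≤ (0 : RMax)) :
    ∀ k (f : ℕ → ι), 1 ≤ k → ∃ (g : ℕ → ι) (t : ℕ), 1 ≤ t ∧ t ≤ Fintype.card ι ∧
      g 0 = f 0 ∧ g t = f k ∧ wW M f k ≤ wW M g t := by
  intro k
  induction k using Nat.strong_induction_on with
  | _ k ih =>
    intro f hk
    by_cases hle : k ≤ Fintype.card ι
    · exact ⟨f, k, hk, hle, rfl, rfl, le_refl _⟩
    · push_neg at hle
      have hcard : Fintype.card ι < Fintype.card (Fin k) := by simp; omega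
      obtain ⟨x, y, hxy, heq⟩ := Fintype.exists_ne_map_eq_of_card_lt
        (fun t : Fin k => f t) hcard
      have hxy' : (x : ℕ) ≠ (y : ℕ) := fun h => hxy (Fin.ext h)
      obtain ⟨a, b, hab, hbk, heq2⟩ : ∃ a b : ℕ, a < b ∧ b < k ∧ f a = f b := by
        rcases lt_or_gt_of_ne hxy' with h1 | h1
        · exact ⟨x, y, h1, y.isLt, heq⟩
        · exact ⟨y, x, h1, x.isLt, heq.symm⟩
      obtain ⟨g, hg0, hgk, hsplit⟩ := wW_split M f hab (le_of_lt hbk) heq2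
      have hloop : wW M (fun t => f (a + t)) (b - a) ≤ (0 : RMax) :=
        h0 _ _ (by show f (a + (b - a)) = f (a + 0)
                   rw [Nat.add_sub_cancel' (le_of_lt hab), add_zero]; exact heq2.symm)
      have hfg : wW M f k ≤ wW M g (k - (b - a)) := by
        rw [hsplit]
        calc wW M g (k - (b - a)) + wW M (fun t => f (a + t)) (b - a)
            ≤ wW M g (k - (b - a)) + 0 := add_le_add_right hloop _
          _ = wW M g (k - (b - a)) := add_zero _
      obtain ⟨g', t, ht1, ht2, hg'0, hg't, hle'⟩ := ih (k - (b - a)) (by omega) g (by omega)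
      exact ⟨g', t, ht1, ht2, by rw [hg'0, hg0], by rw [hg't, hgk], le_trans hfg hle'⟩

end MPHelp

noncomputable section
open Finset

attribute [local instance] Classical.propDecidable

namespace MPHelp

variable {ι : Type} [Fintype ι] [DecidableEq ι]

lemma peel (M : Matrix ι ι RMax) {C : MultiCircuit ι} (hC : InGraph M C)
    (hne : C.verts.Nonempty) :
    ∃ D C' : MultiCircuit ι, IsCircuit D ∧ InGraph M D ∧ InGraph M C' ∧
      C'.verts ⊂ C.verts ∧ D.verts.card + C'.verts.card = C.verts.card ∧
      mcWeight M C = mcWeight M D + mcWeight M C' := by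
  obtain ⟨i, hi⟩ := hne
  set p := C.perm with hp
  have hSC : ∀ j, p.SameCycle i j → j ∈ C.verts := by
    intro j hj
    obtain ⟨z, hz⟩ := hj
    exact hz ▸ perm_zpow_mem hi z
  set S : Finset ι := Finset.univ.filter (fun j => p.SameCycle i j) with hS
  have hmemS : ∀ j, j ∈ S ↔ p.SameCycle i j := by intro j; simp [hS]
  have hSsub : S ⊆ C.verts := fun j hj => hSC j ((hmemS j).mp hj)
  have hiS : i ∈ S := (hmemS i).mpr (Equiv.Perm.SameCycle.refl p i)
  -- cycleOf facts
  have hco : ∀ j, p.SameCycle i j → p.cycleOf i j = p j := by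
    intro j hj; rw [Equiv.Perm.cycleOf_apply, if_pos hj]
  have hcon : ∀ j, ¬ p.SameCycle i j → p.cycleOf i j = j := by
    intro j hj; rw [Equiv.Perm.cycleOf_apply, if_neg hj]
  have hconInv : ∀ j, ¬ p.SameCycle i j → (p.cycleOf i)⁻¹ j = j := by
    intro j hj
    have h := hcon j hj
    calc (p.cycleOf i)⁻¹ j = (p.cycleOf i)⁻¹ ((p.cycleOf i) j) := by rw [h]
      _ = j := Equiv.symm_apply_apply _ _
  -- D: the cycle through i
  refine ⟨⟨S, p.cycleOf i, fun j hj => hcon j (fun h => hj ((hmemS j).mpr h))⟩,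
    ⟨C.verts \ S, p * (p.cycleOf i)⁻¹, ?_⟩, ?_, ?_, ?_, ?_, ?_, ?_⟩
  · -- fixes for C'
    intro j hj
    simp only [Finset.mem_sdiff, not_and, not_not] at hj
    by_cases hjv : j ∈ C.verts
    · have hjS : j ∈ S := hj hjv
      have hsc : p.SameCycle i j := (hmemS j).mp hjS
      have hsc' : p.SameCycle i (p⁻¹ j) := hsc.trans ⟨-1, by simp⟩
      have h1 : (p.cycleOf i) (p⁻¹ j) = j := by
        rw [hco _ hsc', Equiv.Perm.coe_inv, Equiv.apply_symm_apply]
      have h2 : (p.cycleOf i)⁻¹ j = p⁻¹ j := by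
        conv_lhs => rw [← h1]
        rw [Equiv.Perm.coe_inv, Equiv.symm_apply_apply]
      simp [Equiv.Perm.mul_apply, h2]
    · have hnsc : ¬ p.SameCycle i j := fun h => hjv (hSC j h)
      simp only [Equiv.Perm.mul_apply, hconInv j hnsc]
      exact C.fixes j hjv
  · -- IsCircuit D
    constructor
    · exact ⟨i, hiS⟩
    · intro a ha b hb
      have hsca : p.SameCycle i a := (hmemS a).mp ha
      have hscb : p.SameCycle i b := (hmemS b).mp hb
      have key : ∀ x, p.SameCycle i x → (p.cycleOf i).SameCycle i x := by
        intro x hx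
        obtain ⟨z, hz⟩ := hx
        exact ⟨z, by rw [Equiv.Perm.cycleOf_zpow_apply_self]; exact hz⟩
      exact ((key a hsca).symm.trans (key b hscb))
  · -- InGraph D
    intro j hj
    simp only at hj ⊢
    rw [hco j ((hmemS j).mp hj)]
    exact hC j (hSsub hj)
  · -- InGraph C'
    intro j hj
    simp only [Finset.mem_sdiff] at hj
    have hnsc : ¬ p.SameCycle i j := fun h => hj.2 ((hmemS j).mpr h)
    simp only [Equiv.Perm.mul_apply, hconInv j hnsc]
    exact hC j hj.1
  · exact Finset.sdiff_ssubset hSsub ⟨i, hiS⟩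
  · simp only []
    rw [Finset.card_sdiff_of_subset hSsub]
    have := Finset.card_le_card hSsub
    omega
  · -- weight split
    simp only [mcWeight]
    rw [← Finset.sum_sdiff hSsub]
    have e1 : ∑ j ∈ S, M j (C.perm j) = ∑ j ∈ S, M j ((p.cycleOf i) j) :=
      Finset.sum_congr rfl fun j hj => by rw [hco j ((hmemS j).mp hj)]
    have e2 : ∑ j ∈ C.verts \ S, M j (C.perm j) =
        ∑ j ∈ C.verts \ S, M j ((p * (p.cycleOf i)⁻¹) j) := by
      refine Finset.sum_congr rfl fun j hj => ?_
      simp only [Finset.mem_sdiff] at hj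
      have hnsc : ¬ p.SameCycle i j := fun h => hj.2 ((hmemS j).mpr h)
      rw [Equiv.Perm.mul_apply, hconInv j hnsc]
    rw [e1, e2] at *
    rw [add_comm]

lemma multicircuit_bound (M : Matrix ι ι RMax) (c : ℝ)
    (hc : ∀ D : MultiCircuit ι, IsCircuit D → InGraph M D →
      mcWeight M D ≤ D.verts.card • ((c : ℝ) : RMax)) (C : MultiCircuit ι)
    (hC : InGraph M C) : mcWeight M C ≤ C.verts.card • ((c : ℝ) : RMax) := by
  generalize hn : C.verts.card = n
  induction n using Nat.strong_induction_on generalizing C with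
  | _ n ih =>
    rcases Finset.eq_empty_or_nonempty C.verts with he | hne
    · rw [mcWeight, he]
      simp [← hn, he]
    · obtain ⟨D, C', hD, hDg, hC'g, hss, hcard, hw⟩ := peel M hC hne
      have hlt : C'.verts.card < n := by
        have := Finset.card_lt_card hss
        omega
      have h1 := ih C'.verts.card hlt C' hC'g rfl
      have h2 := hc D hD hDg
      calc mcWeight M C = mcWeight M D + mcWeight M C' := hw
        _ ≤ D.verts.card • ((c:ℝ):RMax) + C'.verts.card • ((c:ℝ):RMax) := add_le_add h2 h1
        _ = (D.verts.card + C'.verts.card) • ((c:ℝ):RMax) := (add_nsmul _ _ _).symm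
        _ = n • ((c:ℝ):RMax) := by rw [hcard, hn]

lemma circuit_walk (M : Matrix ι ι RMax) {D : MultiCircuit ι} (hD : IsCircuit D) {j₀ : ι}
    (hj : j₀ ∈ D.verts) :
    (D.perm ^ D.verts.card) j₀ = j₀ ∧
      wW M (fun t => (D.perm ^ t) j₀) D.verts.card = mcWeight M D := by
  set p := D.perm with hp
  by_cases hfix : p j₀ = j₀
  · have hsingle : D.verts = {j₀} := by
      apply Finset.eq_singleton_iff_unique_mem.mpr
      refine ⟨hj, fun j hjv => ?_⟩
      obtain ⟨z, hz⟩ := hD.2 j₀ hj j hjv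
      have : j₀ ∉ p.support := Equiv.Perm.notMem_support.mpr hfix
      have h2 : j₀ ∉ (p ^ z).support := fun h => this (Equiv.Perm.support_zpow_le p z h)
      rw [← hz, Equiv.Perm.notMem_support.mp h2]
    rw [hsingle]
    simp only [Finset.card_singleton]
    constructor
    · simpa using hfix
    · rw [wW, mcWeight, hsingle]
      simp [hfix, ← hp]
  · -- proper cycle
    have hcyc : (p.cycleOf j₀).IsCycle := Equiv.Perm.isCycle_cycleOf p hfix
    have hsupp : (p.cycleOf j₀).support = D.verts := by
      ext j
      rw [Equiv.Perm.mem_support_cycleOf_iff]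
      constructor
      · rintro ⟨hsc, _⟩
        obtain ⟨z, hz⟩ := hsc
        exact hz ▸ perm_zpow_mem hj z
      · intro hjv
        exact ⟨hD.2 j₀ hj j hjv, Equiv.Perm.mem_support.mpr hfix⟩
    have horder : orderOf (p.cycleOf j₀) = D.verts.card := by
      rw [Equiv.Perm.IsCycle.orderOf hcyc, hsupp]
    have hpow : ∀ t : ℕ, (p ^ t) j₀ = ((p.cycleOf j₀) ^ t) j₀ :=
      fun t => (Equiv.Perm.cycleOf_pow_apply_self p j₀ t).symm
    have hret : (p ^ D.verts.card) j₀ = j₀ := by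
      rw [hpow, ← horder, pow_orderOf_eq_one]; rfl
    refine ⟨hret, ?_⟩
    -- injectivity on range
    have hinj : ∀ a b, a < D.verts.card → b < D.verts.card →
        (p ^ a) j₀ = (p ^ b) j₀ → a = b := by
      intro a b ha hb hab
      by_contra hne
      -- wlog a < b
      have key : ∀ a b, a < b → b < D.verts.card → (p ^ a) j₀ = (p ^ b) j₀ → False := by
        intro a b h1 h2 heq
        rw [hpow, hpow] at heq
        have hyv : (p ^ b) j₀ ∈ D.verts := perm_pow_mem hj b
        have hysupp : ((p ^ b) j₀) ∈ (p.cycleOf j₀).support := by rw [hsupp]; exact hyv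
        have hyfix : (p.cycleOf j₀) ((p ^ b) j₀) ≠ (p ^ b) j₀ :=
          Equiv.Perm.mem_support.mp hysupp
        have h3 : ((p.cycleOf j₀) ^ (b - a)) ((p ^ b) j₀) = (p ^ b) j₀ := by
          rw [hpow b]
          conv_lhs => rw [← heq]
          have e : (b - a) + a = b := by omega
          rw [← Equiv.Perm.mul_apply, ← pow_add, e]
        have h4 : (p.cycleOf j₀) ^ (b - a) = 1 :=
          (Equiv.Perm.IsCycle.pow_eq_one_iff' hcyc hyfix).mpr h3
        have h5 := orderOf_le_of_pow_eq_one (by omega : 0 < b - a) h4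
        omega
      rcases lt_or_gt_of_ne hne with h | h
      · exact key a b h hb hab
      · exact key b a h ha hab.symm
    -- image equality
    have himg : (Finset.range D.verts.card).image (fun t => (p ^ t) j₀) = D.verts := by
      apply Finset.eq_of_subset_of_card_le
      · intro j hjm
        simp only [Finset.mem_image, Finset.mem_range] at hjm
        obtain ⟨t, _, rfl⟩ := hjm
        exact perm_pow_mem hj t
      · rw [Finset.card_image_of_injOn]
        · simp
        · intro a ha b hb
          exact hinj a b (Finset.mem_range.mp ha) (Finset.mem_range.mp hb)
    have hsum : mcWeight M D = ∑ t ∈ Finset.range D.verts.card,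
        M ((p ^ t) j₀) (p ((p ^ t) j₀)) := by
      rw [mcWeight]
      conv_lhs => rw [← himg]
      rw [Finset.sum_image
        (fun a ha b hb h => hinj a b (Finset.mem_range.mp ha) (Finset.mem_range.mp hb) h)]
    rw [hsum, wW]
    refine Finset.sum_congr rfl fun t ht => ?_
    congr 1
    rw [pow_succ', Equiv.Perm.mul_apply]

end MPHelp

noncomputable section
open Finset

attribute [local instance] Classical.propDecidable

namespace MPHelp

variable {ι : Type} [Fintype ι] [DecidableEq ι]

lemma eigen_bound (A : Matrix ι ι RMax) [Nonempty ι] {μ : ℝ}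
    (h : IsEigen A ((μ : ℝ) : RMax)) :
    ∃ (k : ℕ) (f : ℕ → ι), 1 ≤ k ∧ f k = f 0 ∧ wW A f k = (((k : ℝ) * μ : ℝ) : RMax) := by
  obtain ⟨x, hx0, hxe⟩ := h
  have hsupp : ∃ i, x i ≠ ⊥ := by
    by_contra hco
    push_neg at hco
    exact hx0 (funext fun i => hco i)
  obtain ⟨i₀, hi₀⟩ := hsupp
  have hstep : ∀ i, x i ≠ ⊥ → ∃ j, x j ≠ ⊥ ∧ A i j + x j = ((μ : ℝ) : RMax) + x i := by
    intro i hi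
    have he : (Finset.univ.sup fun j => A i j + x j) = ((μ:ℝ):RMax) + x i := congrFun hxe i
    obtain ⟨j, _, hj⟩ := Finset.exists_mem_eq_sup Finset.univ Finset.univ_nonempty
      (fun j => A i j + x j)
    rw [he] at hj
    have hne : ((μ:ℝ):RMax) + x i ≠ ⊥ := by
      intro hb
      rcases WithBot.add_eq_bot.mp hb with h1 | h1
      · exact WithBot.coe_ne_bot h1
      · exact hi h1
    refine ⟨j, ?_, hj.symm⟩
    intro hb
    apply hne
    rw [hj, hb, WithBot.add_bot]
  set F : ι → ι := fun i => if h : x i ≠ ⊥ then Classical.choose (hstep i h) else i with hF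
  set f : ℕ → ι := fun t => F^[t] i₀ with hf
  have hfx : ∀ t, x (f t) ≠ ⊥ := by
    intro t
    induction t with
    | zero => exact hi₀
    | succ k ih =>
      have h1 : f (k+1) = F (f k) := Function.iterate_succ_apply' F k i₀
      rw [h1]
      simp only [hF, dif_pos ih]
      exact (Classical.choose_spec (hstep (f k) ih)).1
  have hedge : ∀ t, A (f t) (f (t+1)) + x (f (t+1)) = ((μ:ℝ):RMax) + x (f t) := by
    intro t
    have h1 : f (t+1) = F (f t) := Function.iterate_succ_apply' F t i₀
    rw [h1]
    simp only [hF, dif_pos (hfx t)]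
    exact (Classical.choose_spec (hstep (f t) (hfx t))).2
  have hcard : Fintype.card ι < Fintype.card (Fin (Fintype.card ι + 1)) := by simp
  obtain ⟨a', b', hne', heq'⟩ := Fintype.exists_ne_map_eq_of_card_lt
    (fun t : Fin (Fintype.card ι + 1) => f t) hcard
  have hne'' : (a' : ℕ) ≠ (b' : ℕ) := fun hcontra => hne' (Fin.ext hcontra)
  obtain ⟨a, b, hab, heq2⟩ : ∃ a b : ℕ, a < b ∧ f a = f b := by
    rcases lt_or_gt_of_ne hne'' with h1 | h1
    · exact ⟨a', b', h1, heq'⟩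
    · exact ⟨b', a', h1, heq'.symm⟩
  set ξ : ℕ → ℝ := fun t => WithBot.unbotD 0 (x (f t)) with hξ
  have hxc : ∀ t, x (f t) = ((ξ t : ℝ) : RMax) := by
    intro t
    obtain ⟨r, hr⟩ := WithBot.ne_bot_iff_exists.mp (hfx t)
    rw [← hr]
    simp [hξ, ← hr]
  have hAedge : ∀ t, A (f t) (f (t+1)) = ((μ + ξ t - ξ (t+1) : ℝ) : RMax) := by
    intro t
    have h1 := hedge t
    rw [hxc t, hxc (t+1)] at h1
    have hA : A (f t) (f (t+1)) ≠ ⊥ := by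
      intro hb
      rw [hb, WithBot.bot_add] at h1
      rw [← WithBot.coe_add] at h1
      exact WithBot.coe_ne_bot h1.symm
    obtain ⟨α, hα⟩ := WithBot.ne_bot_iff_exists.mp hA
    rw [← hα, ← WithBot.coe_add, ← WithBot.coe_add] at h1
    have h2 : α + ξ (t+1) = μ + ξ t := WithBot.coe_injective h1
    rw [← hα]
    congr 1
    linarith
  refine ⟨b - a, fun t => f (a + t), by omega, ?_, ?_⟩
  · show f (a + (b - a)) = f (a + 0)
    rw [Nat.add_sub_cancel' (le_of_lt hab), add_zero]
    exact heq2.symm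
  · rw [wW]
    have hterm : ∀ t, A (f (a + t)) (f (a + (t + 1))) =
        ((μ + ξ (a + t) - ξ (a + t + 1) : ℝ) : RMax) := by
      intro t
      have : a + (t + 1) = (a + t) + 1 := by omega
      rw [this]
      exact hAedge (a + t)
    calc ∑ t ∈ Finset.range (b - a), A (f (a + t)) (f (a + (t + 1)))
        = ∑ t ∈ Finset.range (b - a), ((μ + ξ (a + t) - ξ (a + t + 1) : ℝ) : RMax) :=
          Finset.sum_congr rfl fun t _ => hterm t
      _ = ((∑ t ∈ Finset.range (b - a), (μ + ξ (a + t) - ξ (a + t + 1)) : ℝ) : RMax) :=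
          (WithBot.coe_sum _ _).symm
      _ = (((b - a : ℕ) : ℝ) * μ : ℝ) := by
          congr 1
          have e1 : ∑ t ∈ Finset.range (b - a), (μ + ξ (a + t) - ξ (a + t + 1))
              = ∑ t ∈ Finset.range (b - a), (μ + (ξ (a + t) - ξ (a + t + 1))) := by
            refine Finset.sum_congr rfl fun t _ => by ring
          rw [e1, Finset.sum_add_distrib, Finset.sum_const, Finset.card_range]
          have e2 : ∑ t ∈ Finset.range (b - a), (ξ (a + t) - ξ (a + t + 1)) = 0 := by
            have e3 := Finset.sum_range_sub' (fun t => ξ (a + t)) (b - a)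
            have e4 : ∀ t : ℕ, a + (t + 1) = a + t + 1 := fun t => by omega
            rw [show (∑ t ∈ Finset.range (b - a), (ξ (a + t) - ξ (a + t + 1)))
              = ∑ t ∈ Finset.range (b - a), (ξ (a + t) - ξ (a + (t + 1))) from
                Finset.sum_congr rfl fun t _ => by rw [e4 t], e3]
            have e5 : a + (b - a) = b := by omega
            rw [e5, add_zero]
            have : ξ a = ξ b := by rw [hξ]; simp only []; rw [heq2]
            rw [this, sub_self]
          rw [e2, add_zero, nsmul_eq_mul]
  
end MPHelp

noncomputable section
open Finset

attribute [local instance] Classical.propDecidable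

namespace MPHelp

variable {ι : Type} [Fintype ι] [DecidableEq ι]

lemma exists_eigenvec (A : Matrix ι ι RMax) [Nonempty ι] (c : ℝ)
    (hc : ∀ D : MultiCircuit ι, IsCircuit D → InGraph A D →
      mcWeight A D ≤ D.verts.card • ((c : ℝ) : RMax))
    (D : MultiCircuit ι) (hD : IsCircuit D) (hDg : InGraph A D)
    (hDw : mcWeight A D = D.verts.card • ((c : ℝ) : RMax)) :
    IsEigen A ((c : ℝ) : RMax) := by
  set B : Matrix ι ι RMax := fun i j => (((-c : ℝ)) : RMax) + A i j with hB
  have hBbot : ∀ i j, B i j = ⊥ ↔ A i j = ⊥ := by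
    intro i j
    rw [hB]
    simp only []
    constructor
    · intro h
      rcases WithBot.add_eq_bot.mp h with h1 | h1
      · exact absurd h1 WithBot.coe_ne_bot
      · exact h1
    · intro h; rw [h, WithBot.add_bot]
  have hgiff : ∀ C : MultiCircuit ι, InGraph B C ↔ InGraph A C := by
    intro C
    constructor <;> intro h i hi hbot
    · exact h i hi ((hBbot i (C.perm i)).mpr hbot)
    · exact h i hi ((hBbot i (C.perm i)).mp hbot)
  have hwBsplit : ∀ C : MultiCircuit ι,
      mcWeight B C = C.verts.card • (((-c : ℝ)) : RMax) + mcWeight A C := by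
    intro C
    rw [mcWeight, mcWeight]
    have : ∀ i ∈ C.verts, B i (C.perm i) = (((-c:ℝ)):RMax) + A i (C.perm i) := by
      intro i _; rw [hB]
    rw [Finset.sum_congr rfl this, Finset.sum_add_distrib, Finset.sum_const]
  have hcB : ∀ C : MultiCircuit ι, IsCircuit C → InGraph B C →
      mcWeight B C ≤ C.verts.card • (((0:ℝ)) : RMax) := by
    intro C h1 h2
    rw [hwBsplit C]
    have h3 := hc C h1 ((hgiff C).mp h2)
    calc C.verts.card • (((-c:ℝ)):RMax) + mcWeight A C
        ≤ C.verts.card • (((-c:ℝ)):RMax) + C.verts.card • ((c:ℝ):RMax) :=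
          add_le_add_right h3 _
      _ = C.verts.card • (((0:ℝ)):RMax) := by
          rw [← WithBot.coe_nsmul, ← WithBot.coe_nsmul, ← WithBot.coe_add,
            ← WithBot.coe_nsmul]
          congr 1
          simp [nsmul_eq_mul]
  have h0 : ∀ k (f : ℕ → ι), f k = f 0 → wW B f k ≤ (0 : RMax) := by
    intro k f hcl
    have h1 := closed_walk_bound B 0 hcB k f hcl
    calc wW B f k ≤ k • (((0:ℝ)) : RMax) := h1
      _ = 0 := by rw [show (((0:ℝ)):RMax) = 0 from rfl, smul_zero]
  obtain ⟨j₀, hj₀⟩ := hD.1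
  set N := Fintype.card ι with hN
  set x : Vec ι := fun i => (Finset.Icc 1 N).sup fun k => mpPow B k i j₀ with hx
  have hIcc : (Finset.Icc 1 N).Nonempty := by
    rw [Finset.nonempty_Icc]
    exact Fintype.card_pos
  have hwalk := circuit_walk B hD hj₀
  have hwB0 : mcWeight B D = (0 : RMax) := by
    rw [hwBsplit D, hDw, ← WithBot.coe_nsmul, ← WithBot.coe_nsmul, ← WithBot.coe_add]
    rw [show (0 : RMax) = ((0:ℝ):RMax) from rfl]
    congr 1
    simp [nsmul_eq_mul]
  have hx0 : (0 : RMax) ≤ x j₀ := by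
    have h3 := walk_le_pow B D.verts.card (fun t => (D.perm ^ t) j₀)
    rw [hwalk.2, hwB0, hwalk.1, pow_zero] at h3
    have h4 : ((1 : Equiv.Perm ι) j₀) = j₀ := rfl
    rw [h4] at h3
    calc (0 : RMax) ≤ mpPow B D.verts.card j₀ j₀ := h3
      _ ≤ x j₀ := Finset.le_sup (f := fun k => mpPow B k j₀ j₀) (Finset.mem_Icc.mpr
          ⟨Finset.card_pos.mpr hD.1, Finset.card_le_univ _⟩)
  have hpowx : ∀ (t : ℕ) (i : ι), mpPow B t i j₀ ≤ x i := by
    intro t i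
    rcases Nat.eq_zero_or_pos t with rfl | ht
    · show mpId i j₀ ≤ x i
      rw [mpId]
      by_cases hij : i = j₀
      · rw [if_pos hij, hij]
        exact hx0
      · rw [if_neg hij]
        exact bot_le
    · by_cases hbot : mpPow B t i j₀ = ⊥
      · rw [hbot]; exact bot_le
      obtain ⟨f, hf0, hft, hle⟩ := pow_le_walk B t i j₀ hbot
      obtain ⟨g, t', ht1, ht2, hg0, hgt, hle2⟩ := walk_shorten B h0 t f ht
      have h3 := walk_le_pow B t' g
      rw [hg0, hgt, hf0, hft] at h3
      calc mpPow B t i j₀ ≤ wW B f t := hle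
        _ ≤ wW B g t' := hle2
        _ ≤ mpPow B t' i j₀ := h3
        _ ≤ x i := Finset.le_sup (f := fun k => mpPow B k i j₀)
          (Finset.mem_Icc.mpr ⟨ht1, ht2⟩)
  have hBx : mpMulVec B x = x := by
    funext i
    apply le_antisymm
    · show Finset.univ.sup (fun m => B i m + x m) ≤ x i
      refine Finset.sup_le fun m _ => ?_
      calc B i m + x m = (Finset.Icc 1 N).sup (fun k => B i m + mpPow B k m j₀) := by
            rw [show x m = (Finset.Icc 1 N).sup fun k => mpPow B k m j₀ from rfl,
              add_finsetSup _ hIcc]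
        _ ≤ x i := by
            refine Finset.sup_le fun k hk => ?_
            have h1 : B i m + mpPow B k m j₀ ≤ mpPow B (k+1) i j₀ :=
              Finset.le_sup (f := fun m' => B i m' + mpPow B k m' j₀) (Finset.mem_univ m)
            exact le_trans h1 (hpowx (k+1) i)
    · show x i ≤ Finset.univ.sup (fun m => B i m + x m)
      refine Finset.sup_le fun k hk => ?_
      obtain ⟨hk1, hk2⟩ := Finset.mem_Icc.mp hk
      obtain ⟨k', rfl⟩ : ∃ k', k = k' + 1 := ⟨k - 1, by omega⟩
      show mpMul B (mpPow B k') i j₀ ≤ _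
      show Finset.univ.sup (fun m => B i m + mpPow B k' m j₀) ≤ _
      refine Finset.sup_le fun m _ => ?_
      calc B i m + mpPow B k' m j₀ ≤ B i m + x m := add_le_add_right (hpowx k' m) _
        _ ≤ _ := Finset.le_sup (f := fun m => B i m + x m) (Finset.mem_univ m)
  refine ⟨x, ?_, ?_⟩
  · intro hzero
    have hxb : x j₀ = ⊥ := by rw [hzero]; rfl
    rw [hxb] at hx0
    have : ((0:ℝ) : RMax) = ⊥ := le_bot_iff.mp hx0
    exact WithBot.coe_ne_bot this
  · funext i
    show Finset.univ.sup (fun m => A i m + x m) = ((c:ℝ):RMax) + x i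
    have hAB : ∀ i m : ι, A i m = ((c:ℝ):RMax) + B i m := by
      intro i m
      rw [hB]
      simp only []
      rw [← add_assoc, ← WithBot.coe_add]
      norm_num
    calc Finset.univ.sup (fun m => A i m + x m)
        = Finset.univ.sup (fun m => ((c:ℝ):RMax) + (B i m + x m)) := by
          refine Finset.sup_congr rfl fun m _ => ?_
          rw [hAB i m, add_assoc]
      _ = ((c:ℝ):RMax) + Finset.univ.sup (fun m => B i m + x m) :=
          (add_finsetSup _ Finset.univ_nonempty _ _).symm
      _ = ((c:ℝ):RMax) + x i := congrArg (fun y => ((c:ℝ):RMax) + y) (congrFun hBx i)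

end MPHelp

noncomputable section
open Finset

attribute [local instance] Classical.propDecidable

namespace MPHelp

variable {ι : Type} [Fintype ι] [DecidableEq ι]

/-- the empty multicircuit -/
def C0 (ι : Type) : MultiCircuit ι := ⟨∅, 1, fun _ _ => rfl⟩

lemma valAt_C0 (A : Matrix ι ι RMax) (l : RMax) :
    ValAt A (C0 ι) l = Fintype.card ι • l := by
  rw [ValAt, mcWeight, C0]
  simp

lemma mcWeight_bot_of_not_inGraph {A : Matrix ι ι RMax} {C : MultiCircuit ι}
    (h : ¬ InGraph A C) : mcWeight A C = ⊥ := by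
  by_contra hb
  exact h (mcWeight_ne_bot_iff.mp hb)

lemma maximalAt_C0 (A : Matrix ι ι RMax) (μ : ℝ)
    (hb : ∀ C : MultiCircuit ι, InGraph A C → mcWeight A C ≤ C.verts.card • ((μ:ℝ):RMax)) :
    MaximalAt A (C0 ι) μ := by
  intro C'
  rw [valAt_C0, ValAt]
  by_cases hg : InGraph A C'
  · calc mcWeight A C' + (Fintype.card ι - C'.verts.card) • ((μ:ℝ):RMax)
        ≤ C'.verts.card • ((μ:ℝ):RMax) + (Fintype.card ι - C'.verts.card) • ((μ:ℝ):RMax) :=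
          add_le_add_left (hb C' hg) _
      _ = (C'.verts.card + (Fintype.card ι - C'.verts.card)) • ((μ:ℝ):RMax) :=
          (add_nsmul _ _ _).symm
      _ = Fintype.card ι • ((μ:ℝ):RMax) := by
          congr 1
          have := Finset.card_le_univ C'.verts
          have : C'.verts.card ≤ Fintype.card ι := by
            simpa [Finset.card_univ] using this
          omega
  · rw [mcWeight_bot_of_not_inGraph hg, WithBot.bot_add]
    exact bot_le

lemma card_le_fintype (s : Finset ι) : s.card ≤ Fintype.card ι := by
  simpa [Finset.card_univ] using Finset.card_le_univ s

lemma isLamMax_of_maximalAt {A : Matrix ι ι RMax} {C : MultiCircuit ι} {ρ : ℝ}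
    (h : MaximalAt A C ρ) : IsLamMax A C ((ρ:ℝ):RMax) := by
  constructor
  · intro μ hμ
    have : ρ = μ := WithBot.coe_injective hμ
    exact this ▸ h
  · intro hbot
    exact absurd hbot WithBot.coe_ne_bot

lemma alg_eigen_rho (A : Matrix ι ι RMax) (ρ : ℝ)
    (hb : ∀ C : MultiCircuit ι, InGraph A C → mcWeight A C ≤ C.verts.card • ((ρ:ℝ):RMax))
    (D : MultiCircuit ι) (hD : IsCircuit D)
    (hDw : mcWeight A D = D.verts.card • ((ρ:ℝ):RMax)) :
    IsAlgEigen A ((ρ:ℝ):RMax) := by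
  left
  have hmax0 : MaximalAt A (C0 ι) ρ := maximalAt_C0 A ρ hb
  have hval : ValAt A D ((ρ:ℝ):RMax) = ValAt A (C0 ι) ((ρ:ℝ):RMax) := by
    rw [valAt_C0, ValAt, hDw, ← add_nsmul]
    congr 1
    have := card_le_fintype D.verts
    omega
  have hmaxD : MaximalAt A D ρ := fun C' => le_trans (hmax0 C') (le_of_eq hval.symm)
  refine ⟨WithBot.coe_ne_bot, C0 ι, D, isLamMax_of_maximalAt hmax0,
    isLamMax_of_maximalAt hmaxD, ?_⟩
  have h1 : (C0 ι).verts.card = 0 := by rw [C0]; simp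
  have h2 : 0 < D.verts.card := Finset.card_pos.mpr hD.1
  omega

-- a μ-maximal multicircuit of positive length yields an in-graph multicircuit
-- with weight at least ℓ•μ
lemma maximal_pos_card {A : Matrix ι ι RMax} {μ : ℝ} {C : MultiCircuit ι}
    (hmax : MaximalAt A C μ) (hcard : C.verts.card ≠ 0) :
    InGraph A C ∧ (C.verts.card : ℝ) * μ ≤ wR A C := by
  have h1 : ValAt A (C0 ι) ((μ:ℝ):RMax) ≤ ValAt A C ((μ:ℝ):RMax) := hmax (C0 ι)
  rw [valAt_C0, ValAt] at h1
  have hg : InGraph A C := by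
    by_contra hg
    rw [mcWeight_bot_of_not_inGraph hg, WithBot.bot_add, ← WithBot.coe_nsmul] at h1
    exact WithBot.coe_ne_bot (le_bot_iff.mp h1)
  refine ⟨hg, ?_⟩
  rw [mcWeight_coe hg, ← WithBot.coe_nsmul, ← WithBot.coe_nsmul, ← WithBot.coe_add] at h1
  have h2 := WithBot.coe_le_coe.mp h1
  have hle := card_le_fintype C.verts
  have hcast : ((Fintype.card ι - C.verts.card : ℕ) : ℝ)
      = (Fintype.card ι : ℝ) - (C.verts.card : ℝ) := by
    push_cast [Nat.cast_sub hle]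
    ring
  rw [nsmul_eq_mul, nsmul_eq_mul, hcast] at h2
  nlinarith [h2]

lemma real_alg_le (A : Matrix ι ι RMax) (ρ : ℝ)
    (hb : ∀ C : MultiCircuit ι, InGraph A C → mcWeight A C ≤ C.verts.card • ((ρ:ℝ):RMax))
    {μ : ℝ} (h : IsAlgEigen A ((μ:ℝ):RMax)) : μ ≤ ρ := by
  rcases h with ⟨-, C, C', hC, hC', hcard⟩ | ⟨hbot, -⟩
  · obtain ⟨C1, hmax, hc1⟩ : ∃ C1 : MultiCircuit ι, MaximalAt A C1 μ ∧ C1.verts.card ≠ 0 := by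
      rcases Nat.eq_zero_or_pos C.verts.card with h1 | h1
      · exact ⟨C', hC'.1 μ rfl, by omega⟩
      · exact ⟨C, hC.1 μ rfl, by omega⟩
    obtain ⟨hg, hge⟩ := maximal_pos_card hmax hc1
    have h2 := hb C1 hg
    rw [mcWeight_coe hg, ← WithBot.coe_nsmul] at h2
    have h3 := WithBot.coe_le_coe.mp h2
    rw [nsmul_eq_mul] at h3
    have hpos : (0:ℝ) < (C1.verts.card : ℝ) := by
      have : 0 < C1.verts.card := Nat.pos_of_ne_zero hc1
      exact_mod_cast this
    nlinarith
  · exact absurd hbot WithBot.coe_ne_bot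

lemma real_not_alg (A : Matrix ι ι RMax)
    (hnc : ¬ ∃ D : MultiCircuit ι, IsCircuit D ∧ InGraph A D) (μ : ℝ) :
    ¬ IsAlgEigen A ((μ:ℝ):RMax) := by
  intro h
  rcases h with ⟨-, C, C', hC, hC', hcard⟩ | ⟨hbot, -⟩
  · obtain ⟨C1, hmax, hc1⟩ : ∃ C1 : MultiCircuit ι, MaximalAt A C1 μ ∧ C1.verts.card ≠ 0 := by
      rcases Nat.eq_zero_or_pos C.verts.card with h1 | h1
      · exact ⟨C', hC'.1 μ rfl, by omega⟩
      · exact ⟨C, hC.1 μ rfl, by omega⟩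
    obtain ⟨hg, -⟩ := maximal_pos_card hmax hc1
    obtain ⟨D, -, hDc, hDg, -, -, -⟩ := peel A hg
      (Finset.card_pos.mp (Nat.pos_of_ne_zero hc1))
    exact hnc ⟨D, hDc, hDg⟩
  · exact absurd hbot WithBot.coe_ne_bot

lemma eigen_real_le (A : Matrix ι ι RMax) [Nonempty ι] (ρ : ℝ)
    (hc : ∀ D : MultiCircuit ι, IsCircuit D → InGraph A D →
      mcWeight A D ≤ D.verts.card • ((ρ:ℝ):RMax))
    {μ : ℝ} (h : IsEigen A ((μ:ℝ):RMax)) : μ ≤ ρ := by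
  obtain ⟨k, f, hk, hcl, hw⟩ := eigen_bound A h
  have h1 := closed_walk_bound A ρ hc k f hcl
  rw [hw, ← WithBot.coe_nsmul] at h1
  have h2 := WithBot.coe_le_coe.mp h1
  rw [nsmul_eq_mul] at h2
  have hpos : (0:ℝ) < (k:ℝ) := by exact_mod_cast hk
  nlinarith

lemma eigen_real_circuit (A : Matrix ι ι RMax) [Nonempty ι] {μ : ℝ}
    (h : IsEigen A ((μ:ℝ):RMax)) : ∃ D : MultiCircuit ι, IsCircuit D ∧ InGraph A D := by
  obtain ⟨k, f, hk, hcl, hw⟩ := eigen_bound A h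
  exact closed_walk_circuit A k f hk hcl (by rw [hw]; exact WithBot.coe_ne_bot)

end MPHelp

/-! ## Statement 18 -/
theorem max_root_eq_max_eigenvalue {n : ℕ}
    (A : Matrix (Fin (n + 1)) (Fin (n + 1)) RMax) (r m : RMax)
    (hr : IsAlgEigen A r ∧ ∀ r' : RMax, IsAlgEigen A r' → r' ≤ r)
    (hm : IsEigen A m ∧ ∀ l : RMax, IsEigen A l → l ≤ m) :
    r = m := by
  classical
  obtain ⟨hrA, hrM⟩ := hr
  obtain ⟨hmE, hmM⟩ := hm
  by_cases hcirc : ∃ D : MultiCircuit (Fin (n+1)), IsCircuit D ∧ InGraph A D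
  · set circs : Finset (MultiCircuit (Fin (n+1))) :=
      Finset.univ.filter (fun C => IsCircuit C ∧ InGraph A C) with hcircs
    have hcne : circs.Nonempty := by
      obtain ⟨D, h1, h2⟩ := hcirc
      exact ⟨D, by simp [hcircs, h1, h2]⟩
    set mean : MultiCircuit (Fin (n+1)) → ℝ := fun C => MPHelp.wR A C / C.verts.card
      with hmean
    set ρ : ℝ := circs.sup' hcne mean with hρ
    have hcb : ∀ D : MultiCircuit (Fin (n+1)), IsCircuit D → InGraph A D →
        mcWeight A D ≤ D.verts.card • ((ρ:ℝ):RMax) := by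
      intro D h1 h2
      have hmem : D ∈ circs := by simp [hcircs, h1, h2]
      have hle : mean D ≤ ρ := Finset.le_sup' mean hmem
      have hpos : (0:ℝ) < (D.verts.card : ℝ) := by
        exact_mod_cast Finset.card_pos.mpr h1.1
      rw [hmean] at hle
      simp only [] at hle
      rw [div_le_iff₀ hpos] at hle
      rw [MPHelp.mcWeight_coe h2, ← WithBot.coe_nsmul]
      exact WithBot.coe_le_coe.mpr (by rw [nsmul_eq_mul]; linarith)
    have hmcb : ∀ C : MultiCircuit (Fin (n+1)), InGraph A C →
        mcWeight A C ≤ C.verts.card • ((ρ:ℝ):RMax) :=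
      fun C h => MPHelp.multicircuit_bound A ρ hcb C h
    obtain ⟨Dc, hDmem, hDval⟩ := Finset.exists_mem_eq_sup' hcne mean
    have hDc : IsCircuit Dc ∧ InGraph A Dc := by simpa [hcircs] using hDmem
    have hDpos : (0:ℝ) < (Dc.verts.card : ℝ) := by
      exact_mod_cast Finset.card_pos.mpr hDc.1.1
    have hDw : mcWeight A Dc = Dc.verts.card • ((ρ:ℝ):RMax) := by
      rw [MPHelp.mcWeight_coe hDc.2, ← WithBot.coe_nsmul]
      congr 1
      rw [nsmul_eq_mul]
      have hmd : ρ = mean Dc := by rw [hρ, hDval]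
      rw [hmean] at hmd
      simp only [] at hmd
      field_simp at hmd
      linarith
    have hrge : ((ρ:ℝ):RMax) ≤ r := hrM _ (MPHelp.alg_eigen_rho A ρ hmcb Dc hDc.1 hDw)
    have hrle : r ≤ ((ρ:ℝ):RMax) := by
      rcases (eq_or_ne r ⊥) with hb | hb
      · rw [hb]; exact bot_le
      · obtain ⟨μ, hμ⟩ := WithBot.ne_bot_iff_exists.mp hb
        rw [← hμ]
        exact WithBot.coe_le_coe.mpr (MPHelp.real_alg_le A ρ hmcb (hμ.symm ▸ hrA))
    have hmge : ((ρ:ℝ):RMax) ≤ m :=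
      hmM _ (MPHelp.exists_eigenvec A ρ hcb Dc hDc.1 hDc.2 hDw)
    have hmle : m ≤ ((ρ:ℝ):RMax) := by
      rcases (eq_or_ne m ⊥) with hb | hb
      · rw [hb]; exact bot_le
      · obtain ⟨μ, hμ⟩ := WithBot.ne_bot_iff_exists.mp hb
        rw [← hμ]
        exact WithBot.coe_le_coe.mpr (MPHelp.eigen_real_le A ρ hcb (hμ.symm ▸ hmE))
    rw [le_antisymm hrle hrge, le_antisymm hmle hmge]
  · have hrbot : r = ⊥ := by
      by_contra hb
      obtain ⟨μ, hμ⟩ := WithBot.ne_bot_iff_exists.mp hb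
      exact MPHelp.real_not_alg A hcirc μ (hμ.symm ▸ hrA)
    have hmbot : m = ⊥ := by
      by_contra hb
      obtain ⟨μ, hμ⟩ := WithBot.ne_bot_iff_exists.mp hb
      exact hcirc (MPHelp.eigen_real_circuit A (hμ.symm ▸ hmE))
    rw [hrbot, hmbot]
end
end
end
end
end
end
end
end

section
/- Every eigenvalue of a matrix A ∈ ℝ_max^{n×n} is a root of its characteristic polynomial χ_A(t). -/
open Filter

lemma rmax_sum_ne_bot {ι : Type} [DecidableEq ι] (s : Finset ι) (x : ι → WithBot ℝ)
    (h : ∀ i ∈ s, x i ≠ ⊥) : (∑ i ∈ s, x i) ≠ ⊥ := by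
  induction s using Finset.induction with
  | empty => simp
  | insert _ _ hz ih =>
    rw [Finset.sum_insert hz]
    exact WithBot.add_ne_bot.mpr ⟨h _ (Finset.mem_insert_self _ _),
      ih fun i hi => h i (Finset.mem_insert_of_mem hi)⟩

lemma rmax_nsmul_ne_bot (m : ℕ) (c : ℝ) : (m • (c : WithBot ℝ)) ≠ ⊥ := by
  induction m with
  | zero => simp
  | succ k ih =>
    rw [succ_nsmul]
    exact WithBot.add_ne_bot.mpr ⟨ih, WithBot.coe_ne_bot⟩

lemma rmax_sum_eq_bot {ι : Type} [DecidableEq ι] (s : Finset ι) (x : ι → WithBot ℝ)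
    {i : ι} (hi : i ∈ s) (hx : x i = ⊥) : (∑ j ∈ s, x j) = ⊥ := by
  rw [← Finset.add_sum_erase _ _ hi, hx, WithBot.bot_add]

lemma rmax_img_self {n : ℕ} (V : Finset (Fin n)) (σ : Fin n → Fin n)
    (hmem : ∀ i ∈ V, σ i ∈ V) (hinj : Set.InjOn σ ↑V) : V.image σ = V := by
  apply Finset.eq_of_subset_of_card_le
  · intro j hj
    obtain ⟨i, hi, rfl⟩ := Finset.mem_image.mp hj
    exact hmem i hi
  · rw [Finset.card_image_of_injOn hinj]

lemma rmax_sum_comp_perm {n : ℕ} (V : Finset (Fin n)) (σ : Fin n → Fin n)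
    (hmem : ∀ i ∈ V, σ i ∈ V) (hinj : Set.InjOn σ ↑V) (x : Fin n → WithBot ℝ) :
    ∑ i ∈ V, x (σ i) = ∑ i ∈ V, x i := by
  calc ∑ i ∈ V, x (σ i) = ∑ j ∈ V.image σ, x j := (Finset.sum_image fun a ha b hb h =>
        hinj (by simpa using ha) (by simpa using hb) h).symm
  _ = ∑ i ∈ V, x i := by rw [rmax_img_self V σ hmem hinj]

lemma rmax_bij_of_pieces {n : ℕ} (V : Finset (Fin n)) (g : Fin n → Fin n)
    (hmem : ∀ i ∈ V, g i ∈ V) (hinj : ∀ i ∈ V, ∀ j ∈ V, g i = g j → i = j)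
    (hfix : ∀ i ∉ V, g i = i) : Function.Bijective g := by
  rw [← Finite.injective_iff_bijective]
  intro i j hij
  by_cases hi : i ∈ V <;> by_cases hj : j ∈ V
  · exact hinj i hi j hj hij
  · exact absurd (hfix j hj ▸ hij ▸ hmem i hi) hj
  · exact absurd (hfix i hi ▸ hij ▸ hmem j hj : i ∈ V) hi
  · rw [← hfix i hi, ← hfix j hj, hij]

lemma mc_perm_mem_verts {ι : Type} (C : MultiCircuit ι) {i : ι} (hi : i ∈ C.verts) :
    C.perm i ∈ C.verts := by
  by_contra h
  have h2 := C.fixes _ h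
  have h3 : C.perm i = i := C.perm.injective h2
  rw [h3] at h
  exact h hi

open Classical in
lemma rmax_key_bound {n : ℕ} (A : Matrix (Fin n) (Fin n) RMax) (μ : ℝ) (x : Vec (Fin n))
    (S : Finset (Fin n)) (hS : ∀ i, i ∈ S ↔ x i ≠ ⊥)
    (hH1 : ∀ i j, A i j + x j ≤ (μ : RMax) + x i)
    (hblock : ∀ i, i ∉ S → ∀ j ∈ S, A i j = ⊥)
    (C : MultiCircuit (Fin n)) :
    ∃ D : MultiCircuit (Fin n), (∀ i ∈ D.verts, i ∉ S) ∧
      ValAt A C (μ : RMax) ≤ ValAt A D (μ : RMax) := by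
  by_cases hG : InGraph A C
  · -- split verts into S part and complement part
    set σ : Fin n → Fin n := fun i => C.perm i with hσ
    set V := C.verts with hV
    set VS := V.filter (fun i => i ∈ S) with hVS
    set VT := V.filter (fun i => i ∉ S) with hVT
    have hσV : ∀ i ∈ V, σ i ∈ V := fun i hi => mc_perm_mem_verts C hi
    have hσinj : ∀ i j, σ i = σ j → i = j := fun i j h => C.perm.injective h
    have hσT : ∀ i ∈ VT, σ i ∈ VT := by
      intro i hi
      obtain ⟨hiV, hiS⟩ := Finset.mem_filter.mp hi
      have hAi : A i (σ i) ≠ ⊥ := hG i hiV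
      have hσS : σ i ∉ S := fun h => hAi (hblock i hiS _ h)
      exact Finset.mem_filter.mpr ⟨hσV i hiV, hσS⟩
    have hTimg : VT.image σ = VT :=
      rmax_img_self VT σ hσT (fun a _ b _ h => hσinj a b h)
    have hσS : ∀ i ∈ VS, σ i ∈ VS := by
      intro i hi
      obtain ⟨hiV, hiS⟩ := Finset.mem_filter.mp hi
      refine Finset.mem_filter.mpr ⟨hσV i hiV, ?_⟩
      by_contra hniS
      have hmemT : σ i ∈ VT := Finset.mem_filter.mpr ⟨hσV i hiV, hniS⟩
      rw [← hTimg] at hmemT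
      obtain ⟨j, hjT, hj⟩ := Finset.mem_image.mp hmemT
      have : i = j := hσinj _ _ hj.symm
      rw [this] at hiS
      exact (Finset.mem_filter.mp hjT).2 hiS
    -- the complement-part multicircuit
    set τ : Fin n → Fin n := fun i => if i ∈ VT then σ i else i with hτ
    have hτbij : Function.Bijective τ := by
      apply rmax_bij_of_pieces VT
      · intro i hi; simp only [hτ, if_pos hi]; exact hσT i hi
      · intro i hi j hj hij
        simp only [hτ, if_pos hi, if_pos hj] at hij
        exact hσinj _ _ hij
      · intro i hi; simp only [hτ, if_neg hi]
    refine ⟨⟨VT, Equiv.ofBijective τ hτbij, fun i hi => if_neg hi⟩, ?_, ?_⟩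
    · intro i hi
      exact (Finset.mem_filter.mp hi).2
    -- now the value inequality
    have hwD : mcWeight A ⟨VT, Equiv.ofBijective τ hτbij, fun i hi => if_neg hi⟩ =
        ∑ i ∈ VT, A i (σ i) := by
      apply Finset.sum_congr rfl
      intro i hi
      show A i (τ i) = A i (σ i)
      rw [hτ]; simp only [if_pos hi]
    -- bound on the S-part weight
    have hxSne : (∑ i ∈ VS, x i) ≠ ⊥ := by
      apply rmax_sum_ne_bot
      intro i hi
      exact (hS i).mp (Finset.mem_filter.mp hi).2
    have hsum_le : (∑ i ∈ VS, A i (σ i)) + (∑ i ∈ VS, x i) ≤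
        VS.card • (μ : RMax) + (∑ i ∈ VS, x i) := by
      have h1 : ∀ i ∈ VS, A i (σ i) + x (σ i) ≤ (μ : RMax) + x i := fun i _ => hH1 i (σ i)
      have h2 : (∑ i ∈ VS, (A i (σ i) + x (σ i))) ≤ ∑ i ∈ VS, ((μ : RMax) + x i) :=
        Finset.sum_le_sum h1
      rw [Finset.sum_add_distrib, Finset.sum_add_distrib, Finset.sum_const,
        rmax_sum_comp_perm VS σ hσS (fun a _ b _ h => hσinj a b h)] at h2
      exact h2
    have hwS : (∑ i ∈ VS, A i (σ i)) ≤ VS.card • (μ : RMax) :=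
      WithBot.le_of_add_le_add_right hxSne hsum_le
    -- assemble
    have hsplit : mcWeight A C = (∑ i ∈ VS, A i (σ i)) + (∑ i ∈ VT, A i (σ i)) := by
      show (∑ i ∈ V, A i (σ i)) = _
      rw [← Finset.sum_filter_add_sum_filter_not V (fun i => i ∈ S)]
    have hcards : VS.card + VT.card = V.card :=
      Finset.card_filter_add_card_filter_not (fun i => i ∈ S)
    have hVn : V.card ≤ Fintype.card (Fin n) := Finset.card_le_univ V
    show mcWeight A C + (Fintype.card (Fin n) - V.card) • (μ : RMax) ≤
      mcWeight A ⟨VT, Equiv.ofBijective τ hτbij, fun i hi => if_neg hi⟩ +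
        (Fintype.card (Fin n) - VT.card) • (μ : RMax)
    rw [hwD, hsplit]
    calc (∑ i ∈ VS, A i (σ i)) + (∑ i ∈ VT, A i (σ i)) +
          (Fintype.card (Fin n) - V.card) • (μ : RMax)
        ≤ VS.card • (μ : RMax) + (∑ i ∈ VT, A i (σ i)) +
          (Fintype.card (Fin n) - V.card) • (μ : RMax) := by
          apply add_le_add_left
          exact add_le_add_left hwS _
      _ = (∑ i ∈ VT, A i (σ i)) +
          (VS.card • (μ : RMax) + (Fintype.card (Fin n) - V.card) • (μ : RMax)) := by abel
      _ = (∑ i ∈ VT, A i (σ i)) + (Fintype.card (Fin n) - VT.card) • (μ : RMax) := by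
          rw [← add_nsmul]
          have h9 : VS.card + (Fintype.card (Fin n) - V.card) =
              Fintype.card (Fin n) - VT.card := by omega
          rw [h9]
  · -- weight is ⊥
    obtain ⟨i, hiV, hAi⟩ := by
      unfold InGraph at hG; push_neg at hG; exact hG
    refine ⟨⟨∅, 1, fun _ _ => rfl⟩, by simp, ?_⟩
    have : mcWeight A C = ⊥ := rmax_sum_eq_bot _ _ hiV hAi
    show mcWeight A C + _ ≤ _
    rw [this, WithBot.bot_add]
    exact bot_le

/-! ## Statement 19 -/
theorem eigen_is_algEigen {n : ℕ} (A : Matrix (Fin n) (Fin n) RMax) (l : RMax)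
    (hl : IsEigen A l) : IsAlgEigen A l := by
  classical
  obtain ⟨x, hx0, hx⟩ := hl
  have heq : ∀ i, (Finset.univ.sup fun j => A i j + x j) = l + x i := fun i => congrFun hx i
  have hH1 : ∀ i j, A i j + x j ≤ l + x i := by
    intro i j
    rw [← heq i]
    exact Finset.le_sup (f := fun j => A i j + x j) (Finset.mem_univ j)
  have hxne : ∃ j, x j ≠ ⊥ := by
    by_contra h
    push_neg at h
    exact hx0 (funext fun i => h i)
  by_cases hlbot : l = ⊥
  · right
    refine ⟨hlbot, ?_⟩
    obtain ⟨j0, hj0⟩ := hxne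
    have hcol : ∀ i, A i j0 = ⊥ := by
      intro i
      have h1 : A i j0 + x j0 ≤ l + x i := hH1 i j0
      rw [hlbot, WithBot.bot_add] at h1
      have h2 : A i j0 + x j0 = ⊥ := le_bot_iff.mp h1
      rcases WithBot.add_eq_bot.mp h2 with h | h
      · exact h
      · exact absurd h hj0
    intro C hcard hG
    have huniv : C.verts = Finset.univ := Finset.eq_univ_of_card _ hcard
    have hmem : C.perm⁻¹ j0 ∈ C.verts := huniv ▸ Finset.mem_univ _
    have := hG _ hmem
    rw [show C.perm (C.perm⁻¹ j0) = j0 from C.perm.apply_symm_apply j0] at this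
    exact this (hcol _)
  · -- real eigenvalue case
    obtain ⟨μ, hμ⟩ := Option.ne_none_iff_exists'.mp hlbot
    subst hμ
    left
    refine ⟨hlbot, ?_⟩
    set S : Finset (Fin n) := Finset.univ.filter (fun i => x i ≠ ⊥) with hSdef
    have hSiff : ∀ i, i ∈ S ↔ x i ≠ ⊥ := by
      intro i; simp [hSdef]
    have hblock : ∀ i, i ∉ S → ∀ j ∈ S, A i j = ⊥ := by
      intro i hi j hj
      have hxi : x i = ⊥ := by
        by_contra h; exact hi ((hSiff i).mpr h)
      have h1 : A i j + x j ≤ (μ : RMax) + x i := hH1 i j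
      rw [hxi, WithBot.add_bot] at h1
      rcases WithBot.add_eq_bot.mp (le_bot_iff.mp h1) with h | h
      · exact h
      · exact absurd h ((hSiff j).mp hj)
    -- successor function on the support
    have hfex : ∀ i : Fin n, ∃ j : Fin n, i ∈ S → j ∈ S ∧ A i j + x j = (μ : RMax) + x i := by
      intro i
      by_cases hi : i ∈ S
      · obtain ⟨j, -, hj⟩ := Finset.exists_mem_eq_sup Finset.univ
          ⟨i, Finset.mem_univ i⟩ (fun j => A i j + x j)
        have hsup : A i j + x j = (μ : RMax) + x i := by rw [← hj, heq]; rfl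
        have hne : A i j + x j ≠ ⊥ := by
          rw [hsup]
          exact WithBot.add_ne_bot.mpr ⟨WithBot.coe_ne_bot, (hSiff i).mp hi⟩
        exact ⟨j, fun _ => ⟨(hSiff j).mpr (WithBot.add_ne_bot.mp hne).2, hsup⟩⟩
      · exact ⟨i, fun h => absurd h hi⟩
    choose f hf using hfex
    have hfS : ∀ i ∈ S, f i ∈ S := fun i hi => (hf i hi).1
    have hfeq : ∀ i ∈ S, A i (f i) + x (f i) = (μ : RMax) + x i := fun i hi => (hf i hi).2
    obtain ⟨i0, hi0⟩ := hxne
    have hi0S : i0 ∈ S := (hSiff i0).mpr hi0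
    have hiter : ∀ t, f^[t] i0 ∈ S := by
      intro t
      induction t with
      | zero => exact hi0S
      | succ k ih => rw [Function.iterate_succ_apply']; exact hfS _ ih
    -- pigeonhole: find a periodic point
    obtain ⟨a, b, hab, hfab⟩ :=
      Finite.exists_ne_map_eq_of_infinite (fun t : ℕ => f^[t] i0)
    have hper0 : ∃ k p, 0 < k ∧ f^[k] p = p ∧ p ∈ S ∧ (∀ t, f^[t] p ∈ S) := by
      rcases lt_or_gt_of_ne hab with h | h
      · refine ⟨b - a, f^[a] i0, by omega, ?_, hiter a, fun t => ?_⟩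
        · rw [← Function.iterate_add_apply]
          have : b - a + a = b := by omega
          rw [this]; exact hfab.symm
        · rw [← Function.iterate_add_apply]; exact hiter _
      · refine ⟨a - b, f^[b] i0, by omega, ?_, hiter b, fun t => ?_⟩
        · rw [← Function.iterate_add_apply]
          have : a - b + b = a := by omega
          rw [this]; exact hfab
        · rw [← Function.iterate_add_apply]; exact hiter _
    obtain ⟨k1, p, hk1, hk1per, hpS, hallS⟩ := hper0
    -- minimal period
    have hPex : ∃ m, 0 < m ∧ f^[m] p = p := ⟨k1, hk1, hk1per⟩
    set k0 := Nat.find hPex with hk0def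
    obtain ⟨hk0pos, hk0per⟩ := Nat.find_spec hPex
    have hk0min : ∀ m, 0 < m → m < k0 → f^[m] p ≠ p := by
      intro m hm hmk hmp
      exact Nat.find_min hPex hmk ⟨hm, hmp⟩
    set O : Finset (Fin n) := (Finset.range k0).image (fun t => f^[t] p) with hOdef
    have hOS : ∀ i ∈ O, i ∈ S := by
      intro i hi
      obtain ⟨t, -, rfl⟩ := Finset.mem_image.mp hi
      exact hallS t
    have hpO : p ∈ O := Finset.mem_image.mpr ⟨0, Finset.mem_range.mpr hk0pos, rfl⟩
    have hfO : ∀ i ∈ O, f i ∈ O := by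
      intro i hi
      obtain ⟨t, ht, rfl⟩ := Finset.mem_image.mp hi
      rw [Finset.mem_range] at ht
      have hstep : f (f^[t] p) = f^[t + 1] p := (Function.iterate_succ_apply' f t p).symm
      rcases eq_or_lt_of_le (Nat.succ_le_of_lt ht) with h | h
      · rw [hstep, show t + 1 = k0 from h, hk0per]; exact hpO
      · rw [hstep]; exact Finset.mem_image.mpr ⟨t + 1, Finset.mem_range.mpr h, rfl⟩
    have hkey : ∀ s t, s ≤ t → t < k0 → f^[s + 1] p = f^[t + 1] p → s = t := by
      intro s t hst htk h
      by_contra hne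
      have hslt : s < t := lt_of_le_of_ne hst hne
      have h2 : f^[k0 - (t + 1)] (f^[t + 1] p) = p := by
        rw [← Function.iterate_add_apply]
        have : k0 - (t + 1) + (t + 1) = k0 := by omega
        rw [this]; exact hk0per
      rw [← h, ← Function.iterate_add_apply] at h2
      exact hk0min (k0 - (t + 1) + (s + 1)) (by omega) (by omega) h2
    have hfOinj : ∀ i ∈ O, ∀ j ∈ O, f i = f j → i = j := by
      intro i hi j hj hij
      obtain ⟨s, hs, rfl⟩ := Finset.mem_image.mp hi
      obtain ⟨t, ht, rfl⟩ := Finset.mem_image.mp hj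
      rw [Finset.mem_range] at hs ht
      rw [← Function.iterate_succ_apply' f s p, ← Function.iterate_succ_apply' f t p] at hij
      rcases le_total s t with h | h
      · rw [hkey s t h ht hij]
      · rw [hkey t s h hs hij.symm]
    -- the circuit C₀
    set g : Fin n → Fin n := fun i => if i ∈ O then f i else i with hgdef
    have hgbij : Function.Bijective g := by
      apply rmax_bij_of_pieces O
      · intro i hi; simp only [hgdef, if_pos hi]; exact hfO i hi
      · intro i hi j hj hij
        simp only [hgdef, if_pos hi, if_pos hj] at hij
        exact hfOinj i hi j hj hij
      · intro i hi; simp only [hgdef, if_neg hi]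
    set σ0 : Equiv.Perm (Fin n) := Equiv.ofBijective g hgbij with hσ0def
    have hσ0app : ∀ i, σ0 i = g i := fun i => rfl
    -- the orbit has total weight O.card • μ
    have hOw : (∑ i ∈ O, A i (f i)) = O.card • ((μ : ℝ) : RMax) := by
      have hsum : (∑ i ∈ O, (A i (f i) + x (f i))) = ∑ i ∈ O, (((μ : ℝ) : RMax) + x i) :=
        Finset.sum_congr rfl fun i hi => hfeq i (hOS i hi)
      rw [Finset.sum_add_distrib, Finset.sum_add_distrib, Finset.sum_const,
        rmax_sum_comp_perm O f hfO (fun a ha b hb h => hfOinj a (by simpa using ha) b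
          (by simpa using hb) h)] at hsum
      have hxOne : (∑ i ∈ O, x i) ≠ ⊥ :=
        rmax_sum_ne_bot _ _ fun i hi => (hSiff i).mp (hOS i hi)
      exact WithBot.add_right_cancel hxOne hsum
    -- maximize over multicircuits supported off S
    set Qp : Finset (Fin n) × Equiv.Perm (Fin n) → Prop :=
      fun q => (∀ i ∈ q.1, i ∉ S) ∧ ∀ i ∉ q.1, q.2 i = i with hQpdef
    set Q : Finset (Finset (Fin n) × Equiv.Perm (Fin n)) := Finset.univ.filter Qp with hQdef
    have hQne : Q.Nonempty := by
      refine ⟨(∅, 1), Finset.mem_filter.mpr ⟨Finset.mem_univ _, ?_, ?_⟩⟩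
      · intro i hi; exact absurd hi (Finset.notMem_empty i)
      · intro i _; rfl
    set val : Finset (Fin n) × Equiv.Perm (Fin n) → RMax :=
      fun q => (∑ i ∈ q.1, A i (q.2 i)) + (Fintype.card (Fin n) - q.1.card) • ((μ : ℝ) : RMax)
      with hvaldef
    obtain ⟨q, hqQ, hqmax⟩ := Finset.exists_max_image Q val hQne
    obtain ⟨-, hq1, hq2⟩ := Finset.mem_filter.mp hqQ
    set Cstar : MultiCircuit (Fin n) := ⟨q.1, q.2, hq2⟩ with hCstardef
    have hmax : ∀ C' : MultiCircuit (Fin n),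
        ValAt A C' ((μ : ℝ) : RMax) ≤ ValAt A Cstar ((μ : ℝ) : RMax) := by
      intro C'
      obtain ⟨D, hD1, hD2⟩ := rmax_key_bound A μ x S hSiff hH1 hblock C'
      have hDQ : (D.verts, D.perm) ∈ Q :=
        Finset.mem_filter.mpr ⟨Finset.mem_univ _, hD1, D.fixes⟩
      have hDval : ValAt A D ((μ : ℝ) : RMax) = val (D.verts, D.perm) := rfl
      have hCval : ValAt A Cstar ((μ : ℝ) : RMax) = val q := rfl
      rw [hCval]
      exact hD2.trans (hDval ▸ hqmax _ hDQ)
    -- combine Cstar with the orbit circuit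
    have hdisj : Disjoint q.1 O :=
      Finset.disjoint_left.mpr fun i hi1 hiO => hq1 i hi1 (hOS i hiO)
    have hfixdd : ∀ i, i ∉ q.1 ∪ O → (q.2 * σ0) i = i := by
      intro i hi
      rw [Finset.mem_union, not_or] at hi
      rw [Equiv.Perm.mul_apply, hσ0app, hgdef]
      simp only [if_neg hi.2]
      exact hq2 i hi.1
    set Cdd : MultiCircuit (Fin n) := ⟨q.1 ∪ O, q.2 * σ0, hfixdd⟩ with hCdddef
    have hwCdd : mcWeight A Cdd =
        (∑ i ∈ q.1, A i (q.2 i)) + O.card • ((μ : ℝ) : RMax) := by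
      show (∑ i ∈ q.1 ∪ O, A i ((q.2 * σ0) i)) = _
      rw [Finset.sum_union hdisj]
      congr 1
      · apply Finset.sum_congr rfl
        intro i hi
        have hiO : i ∉ O := Finset.disjoint_left.mp hdisj hi
        rw [Equiv.Perm.mul_apply, hσ0app, hgdef]
        simp only [if_neg hiO]
      · rw [← hOw]
        apply Finset.sum_congr rfl
        intro i hi
        have hfiS : f i ∈ S := hfS i (hOS i hi)
        have hfiq : f i ∉ q.1 := fun h => hq1 _ h hfiS
        rw [Equiv.Perm.mul_apply, hσ0app, hgdef]
        simp only [if_pos hi]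
        rw [hq2 _ hfiq]
    have hcardd : Cdd.verts.card = q.1.card + O.card := Finset.card_union_of_disjoint hdisj
    have hcardle : q.1.card + O.card ≤ Fintype.card (Fin n) := by
      rw [← hcardd]; exact Finset.card_le_univ _
    have hvalCdd : ValAt A Cdd ((μ : ℝ) : RMax) = ValAt A Cstar ((μ : ℝ) : RMax) := by
      show mcWeight A Cdd + (Fintype.card (Fin n) - Cdd.verts.card) • ((μ : ℝ) : RMax) =
        mcWeight A Cstar + (Fintype.card (Fin n) - Cstar.verts.card) • ((μ : ℝ) : RMax)
      rw [hwCdd, hcardd]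
      have h1 : mcWeight A Cstar = ∑ i ∈ q.1, A i (q.2 i) := rfl
      rw [h1, add_assoc, ← add_nsmul]
      congr 2
      show O.card + (Fintype.card (Fin n) - (q.1.card + O.card)) =
        Fintype.card (Fin n) - q.1.card
      omega
    have hOcard : 0 < O.card := Finset.card_pos.mpr ⟨p, hpO⟩
    refine ⟨Cstar, Cdd, ?_, ?_, ?_⟩
    · constructor
      · intro μ' hμ'
        have hμμ : μ = μ' := WithBot.coe_inj.mp hμ'
        subst hμμ
        exact hmax
      · intro hbot; exact absurd hbot hlbot
    · constructor
      · intro μ' hμ'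
        have hμμ : μ = μ' := WithBot.coe_inj.mp hμ'
        subst hμμ
        intro C'
        rw [hvalCdd]
        exact hmax C'
      · intro hbot; exact absurd hbot hlbot
    · rw [hcardd]
      show q.1.card ≠ q.1.card + O.card
      omega
end
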